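/- arXiv:2405.02988 — 5 statements merged into one kernel-verified Lean document; each statement's English description precedes it below -/
import Mathlib

section
/- For integers k, j ≥ 1 and μ > −1, w ∂/∂z̄ Q^μ_{k,j}(z,w) − j Q^μ_{k,j}(z,w) = (kj/(μ+1)) Q^{μ+1}_{k−1,j−1}(z,w); and for integers k, j ≥ 0 and μ > 0, (1−zw) w ∂/∂z̄ Q^μ_{k,j}(z,w) + [(k+1)(1−zw) − μ zw] Q^μ_{k,j}(z,w) = −μ Q^{μ−1}_{k+1,j+1}(z,w). These are identities of bivariate polynomials in (z,w). -/
noncomputable def jacobiP (α β : ℝ) (n : ℕ) : Polynomial ℝ :=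
  (n.factorial : ℝ)⁻¹ •
    ∑ k ∈ Finset.range (n + 1),
      ((n.choose k : ℝ) * ((ascPochhammer ℝ (n - k)).eval ((k : ℝ) + α + 1)) *
          ((ascPochhammer ℝ k).eval ((n : ℝ) + α + β + 1))) •
        ((Polynomial.X - 1) * Polynomial.C (2⁻¹ : ℝ)) ^ k

noncomputable def zernikeQ (μ : ℝ) (k j : ℕ) : MvPolynomial (Fin 2) ℂ :=
  if j ≤ k then
    MvPolynomial.C ((((j.factorial : ℝ) / ((ascPochhammer ℝ j).eval (μ + 1)) : ℝ) : ℂ)) *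
      MvPolynomial.X 0 ^ (k - j) *
      Polynomial.aeval (2 * MvPolynomial.X 0 * MvPolynomial.X 1 - 1)
        (jacobiP μ ((k - j : ℕ) : ℝ) j)
  else
    MvPolynomial.C ((((k.factorial : ℝ) / ((ascPochhammer ℝ k).eval (μ + 1)) : ℝ) : ℂ)) *
      MvPolynomial.X 1 ^ (j - k) *
      Polynomial.aeval (2 * MvPolynomial.X 0 * MvPolynomial.X 1 - 1)
        (jacobiP μ ((j - k : ℕ) : ℝ) k)




noncomputable def jcoef (μ δ : ℝ) (n m : ℕ) : ℝ :=
  (n.factorial : ℝ)⁻¹ * (n.choose m : ℝ) *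
    (ascPochhammer ℝ (n - m)).eval ((m : ℝ) + μ + 1) *
    (ascPochhammer ℝ m).eval ((n : ℝ) + μ + δ + 1)

lemma jcoef_eq_zero {μ δ : ℝ} {n m : ℕ} (h : n < m) : jcoef μ δ n m = 0 := by
  simp [jcoef, Nat.choose_eq_zero_of_lt h]

lemma poch_succ_left (n : ℕ) (x : ℝ) :
    (ascPochhammer ℝ (n+1)).eval x = x * (ascPochhammer ℝ n).eval (x+1) := by
  rw [ascPochhammer_succ_left]
  simp [Polynomial.eval_comp, mul_comm]

lemma fac_ne (n : ℕ) : (n.factorial : ℝ) ≠ 0 :=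
  Nat.cast_ne_zero.2 (Nat.factorial_ne_zero _)

lemma lemA (μ δ : ℝ) (n m : ℕ) :
    ((m:ℝ)+1) * jcoef μ δ (n+1) (m+1) + ((m:ℝ) - ((n:ℝ)+1)) * jcoef μ δ (n+1) m
      = ((n:ℝ)+1+δ) * jcoef (μ+1) δ n m := by
  rcases le_or_gt m n with h | h
  · obtain ⟨r, rfl⟩ := Nat.exists_eq_add_of_le h
    simp only [jcoef]
    rw [show m + r + 1 - (m+1) = r by omega, show m + r + 1 - m = r + 1 by omega,
      show m + r - m = r by omega]
    rw [poch_succ_left r, ascPochhammer_succ_eval]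
    rw [show ((m+1:ℕ):ℝ) + μ + 1 = (m:ℝ)+μ+2 by push_cast; ring,
      show (m:ℝ)+μ+1+1 = (m:ℝ)+μ+2 by ring,
      show (m:ℝ) + (μ+1) + 1 = (m:ℝ)+μ+2 by ring,
      show ((m+r+1:ℕ):ℝ) + μ + δ + 1 = (m:ℝ)+(r:ℝ)+μ+δ+2 by push_cast; ring,
      show ((m+r:ℕ):ℝ) + (μ+1) + δ + 1 = (m:ℝ)+(r:ℝ)+μ+δ+2 by push_cast; ring]
    rw [Nat.cast_choose ℝ (show m+1 ≤ m+r+1 by omega),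
      Nat.cast_choose ℝ (show m ≤ m+r+1 by omega), Nat.cast_choose ℝ (show m ≤ m+r by omega),
      show m+r+1-(m+1) = r by omega, show m+r+1-m = r+1 by omega, show m+r-m = r by omega]
    rw [show (m+r+1).factorial = (m+r+1) * (m+r).factorial from Nat.factorial_succ _,
      show (m+1).factorial = (m+1) * m.factorial from Nat.factorial_succ _,
      show (r+1).factorial = (r+1) * r.factorial from Nat.factorial_succ _]
    have h1 := fac_ne m; have h2 := fac_ne r; have h3 := fac_ne (m+r)
    have h4 : ((m:ℝ)+1) ≠ 0 := by positivity
    have h5 : ((r:ℝ)+1) ≠ 0 := by positivity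
    have h6 : ((m:ℝ)+(r:ℝ)+1) ≠ 0 := by positivity
    push_cast
    field_simp
    ring
  · have h2 : n + 1 ≤ m := h
    rcases eq_or_lt_of_le h2 with rfl | h3
    · have z1 : jcoef μ δ (n+1) (n+1+1) = 0 := jcoef_eq_zero (by omega)
      have z2 : jcoef (μ+1) δ n (n+1) = 0 := jcoef_eq_zero (by omega)
      rw [z1, z2]; push_cast; ring
    · have z1 : jcoef μ δ (n+1) (m+1) = 0 := jcoef_eq_zero (by omega)
      have z2 : jcoef μ δ (n+1) m = 0 := jcoef_eq_zero (by omega)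
      have z3 : jcoef (μ+1) δ n m = 0 := jcoef_eq_zero (by omega)
      rw [z1, z2, z3]; ring

lemma lemB0 (μ δ : ℝ) (n : ℕ) :
    μ * jcoef μ δ n 0 = ((n:ℝ)+1) * jcoef (μ-1) δ (n+1) 0 := by
  simp only [jcoef, Nat.choose_zero_right, Nat.cast_one, Nat.cast_zero, Nat.sub_zero,
    ascPochhammer_zero, Polynomial.eval_one]
  rw [show (0:ℝ) + (μ-1) + 1 = μ by ring, show (0:ℝ) + μ + 1 = μ + 1 by ring,
    poch_succ_left n μ,
    show (n+1).factorial = (n+1) * n.factorial from Nat.factorial_succ _]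
  have h1 := fac_ne n
  have h4 : ((n:ℝ)+1) ≠ 0 := by positivity
  push_cast
  field_simp

lemma lemBs (μ δ : ℝ) (n m : ℕ) :
    ((m:ℝ)+1+μ) * jcoef μ δ n (m+1) + ((m:ℝ)+1+(n:ℝ)+δ+μ) * jcoef μ δ n m
      = ((n:ℝ)+1) * jcoef (μ-1) δ (n+1) (m+1) := by
  rcases lt_trichotomy n m with h | rfl | h
  · have z1 : jcoef μ δ n (m+1) = 0 := jcoef_eq_zero (by omega)
    have z2 : jcoef μ δ n m = 0 := jcoef_eq_zero (by omega)
    have z3 : jcoef (μ-1) δ (n+1) (m+1) = 0 := jcoef_eq_zero (by omega)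
    rw [z1, z2, z3]; ring
  · -- n = m
    have z1 : jcoef μ δ n (n+1) = 0 := jcoef_eq_zero (by omega)
    rw [z1]
    simp only [jcoef, Nat.choose_self, Nat.cast_one, Nat.sub_self,
      ascPochhammer_zero, Polynomial.eval_one]
    rw [show ((n+1:ℕ):ℝ) + (μ-1) + δ + 1 = (n:ℝ)+μ+δ+1 by push_cast; ring,
      ascPochhammer_succ_eval,
      show (n+1).factorial = (n+1) * n.factorial from Nat.factorial_succ _]
    have h1 := fac_ne n
    have h4 : ((n:ℝ)+1) ≠ 0 := by positivity
    push_cast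
    field_simp
    ring
  · -- m < n, n = m + s + 1
    obtain ⟨s, rfl⟩ : ∃ s, n = m + s + 1 := ⟨n - m - 1, by omega⟩
    simp only [jcoef]
    rw [show m + s + 1 - (m+1) = s by omega, show m + s + 1 - m = s + 1 by omega,
      show m + s + 1 + 1 - (m+1) = s + 1 by omega]
    rw [show ((m+1:ℕ):ℝ) + μ + 1 = (m:ℝ)+μ+2 by push_cast; ring,
      show ((m+1:ℕ):ℝ) + (μ-1) + 1 = (m:ℝ)+μ+1 by push_cast; ring,
      show ((m+s+1:ℕ):ℝ) + μ + δ + 1 = (m:ℝ)+(s:ℝ)+μ+δ+2 by push_cast; ring,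
      show ((m+s+1+1:ℕ):ℝ) + (μ-1) + δ + 1 = (m:ℝ)+(s:ℝ)+μ+δ+2 by push_cast; ring]
    rw [poch_succ_left s ((m:ℝ)+μ+1),
      show (m:ℝ)+μ+1+1 = (m:ℝ)+μ+2 by ring]
    simp only [ascPochhammer_succ_eval]
    rw [Nat.cast_choose ℝ (show m+1 ≤ m+s+1 by omega),
      Nat.cast_choose ℝ (show m ≤ m+s+1 by omega),
      Nat.cast_choose ℝ (show m+1 ≤ m+s+1+1 by omega),
      show m+s+1-(m+1) = s by omega, show m+s+1-m = s+1 by omega,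
      show m+s+1+1-(m+1) = s+1 by omega]
    rw [show (m+s+1+1).factorial = (m+s+2) * ((m+s+1) * (m+s).factorial) by
        rw [Nat.factorial_succ, Nat.factorial_succ],
      show (m+s+1).factorial = (m+s+1) * (m+s).factorial from Nat.factorial_succ _,
      show (m+1).factorial = (m+1) * m.factorial from Nat.factorial_succ _,
      show (s+1).factorial = (s+1) * s.factorial from Nat.factorial_succ _]
    have h1 := fac_ne m; have h2 := fac_ne s; have h3 := fac_ne (m+s)
    have h4 : ((m:ℝ)+1) ≠ 0 := by positivity
    have h5 : ((s:ℝ)+1) ≠ 0 := by positivity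
    have h6 : ((m:ℝ)+(s:ℝ)+1) ≠ 0 := by positivity
    have h7 : ((m:ℝ)+(s:ℝ)+2) ≠ 0 := by positivity
    push_cast
    field_simp
    ring

noncomputable def jacobiG (μ δ : ℝ) (n : ℕ) : Polynomial ℝ :=
  ∑ m ∈ Finset.range (n+1), Polynomial.C (jcoef μ δ n m) * Polynomial.X ^ m

lemma jacobiG_coeff (μ δ : ℝ) (n m : ℕ) : (jacobiG μ δ n).coeff m = jcoef μ δ n m := by
  rw [jacobiG, Polynomial.finset_sum_coeff]
  simp only [Polynomial.coeff_C_mul, Polynomial.coeff_X_pow, mul_ite, mul_one, mul_zero]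
  rw [Finset.sum_ite_eq (Finset.range (n+1)) m (fun i => jcoef μ δ n i)]
  split
  · rfl
  · next hm =>
      refine (jcoef_eq_zero ?_).symm
      simp only [Finset.mem_range] at hm
      omega

lemma polyA (μ δ : ℝ) (n : ℕ) :
    (Polynomial.X + 1) * Polynomial.derivative (jacobiG μ δ (n+1))
      - Polynomial.C ((n:ℝ)+1) * jacobiG μ δ (n+1)
      = Polynomial.C ((n:ℝ)+1+δ) * jacobiG (μ+1) δ n := by
  ext m
  rw [add_mul, one_mul]
  rcases m with _ | m
  · simp only [Polynomial.coeff_sub, Polynomial.coeff_add, Polynomial.mul_coeff_zero,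
      Polynomial.coeff_X_zero, zero_mul, Polynomial.coeff_derivative, jacobiG_coeff,
      Polynomial.coeff_C_mul, Polynomial.coeff_C_zero]
    have := lemA μ δ n 0
    push_cast at this ⊢
    linear_combination this
  · simp only [Polynomial.coeff_sub, Polynomial.coeff_add, Polynomial.coeff_X_mul,
      Polynomial.coeff_derivative, jacobiG_coeff, Polynomial.coeff_C_mul]
    have := lemA μ δ n (m+1)
    push_cast at this ⊢
    linear_combination this

lemma polyB (μ δ : ℝ) (n : ℕ) :
    -(Polynomial.X * (Polynomial.X * Polynomial.derivative (jacobiG μ δ n))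
        + Polynomial.X * Polynomial.derivative (jacobiG μ δ n))
      - (Polynomial.C ((n:ℝ)+δ+μ+1) * (Polynomial.X * jacobiG μ δ n)
        + Polynomial.C μ * jacobiG μ δ n)
      = Polynomial.C (-((n:ℝ)+1)) * jacobiG (μ-1) δ (n+1) := by
  ext m
  rcases m with _ | _ | m
  · simp only [Polynomial.coeff_sub, Polynomial.coeff_add, Polynomial.coeff_neg,
      Polynomial.mul_coeff_zero, Polynomial.coeff_X_zero, zero_mul,
      Polynomial.coeff_derivative, jacobiG_coeff, Polynomial.coeff_C_mul,
      Polynomial.coeff_C_zero]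
    have := lemB0 μ δ n
    push_cast at this ⊢
    linear_combination -this
  · simp only [Polynomial.coeff_sub, Polynomial.coeff_add, Polynomial.coeff_neg,
      Polynomial.coeff_X_mul, Polynomial.mul_coeff_zero, Polynomial.coeff_X_zero, zero_mul,
      Polynomial.coeff_derivative, jacobiG_coeff, Polynomial.coeff_C_mul]
    have := lemBs μ δ n 0
    push_cast at this ⊢
    linear_combination -this
  · simp only [Polynomial.coeff_sub, Polynomial.coeff_add, Polynomial.coeff_neg,
      Polynomial.coeff_X_mul, Polynomial.coeff_derivative, jacobiG_coeff,
      Polynomial.coeff_C_mul]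
    have := lemBs μ δ n (m+1)
    push_cast at this ⊢
    linear_combination -this

open MvPolynomial

noncomputable def rr : MvPolynomial (Fin 2) ℂ := X 0 * X 1 - 1

lemma halfSubst : Polynomial.aeval (2 * X 0 * X 1 - 1 : MvPolynomial (Fin 2) ℂ)
    ((Polynomial.X - 1) * Polynomial.C (2⁻¹ : ℝ)) = rr := by
  rw [map_mul, map_sub, Polynomial.aeval_X, Polynomial.aeval_one, Polynomial.aeval_C]
  rw [IsScalarTower.algebraMap_apply ℝ ℂ (MvPolynomial (Fin 2) ℂ), MvPolynomial.algebraMap_eq]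
  have h2 : (MvPolynomial.C ((algebraMap ℝ ℂ) 2⁻¹) : MvPolynomial (Fin 2) ℂ) * 2 = 1 := by
    rw [show ((2:MvPolynomial (Fin 2) ℂ)) = MvPolynomial.C 2 from (map_ofNat _ 2).symm, ← map_mul]
    norm_num
  rw [rr]
  linear_combination (X 0 * X 1 - 1 : MvPolynomial (Fin 2) ℂ) * h2

lemma key0 (μ d : ℝ) (n : ℕ) :
    Polynomial.aeval (2 * X 0 * X 1 - 1 : MvPolynomial (Fin 2) ℂ) (jacobiP μ d n)
      = Polynomial.aeval rr (jacobiG μ d n) := by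
  rw [jacobiP, jacobiG, map_smul, map_sum, map_sum, Finset.smul_sum]
  refine Finset.sum_congr rfl fun i hi => ?_
  rw [map_smul, map_pow, halfSubst, map_mul, Polynomial.aeval_C, map_pow, Polynomial.aeval_X]
  rw [smul_smul, Algebra.smul_def, jcoef, mul_assoc, mul_assoc, mul_assoc]

lemma pderiv_aeval_rr (g : Polynomial ℝ) :
    pderiv (1:Fin 2) (Polynomial.aeval rr g)
      = Polynomial.aeval rr (Polynomial.derivative g) * X 0 := by
  rw [← Polynomial.aeval_map_algebraMap ℂ _ g, Derivation.map_aeval,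
    Polynomial.derivative_map, Polynomial.aeval_map_algebraMap]
  have h : pderiv (1:Fin 2) rr = X 0 := by simp [rr]
  rw [h, smul_eq_mul]

lemma pderiv_cX0 (c : ℂ) (d : ℕ) (g : Polynomial ℝ) :
    pderiv (1:Fin 2) (C c * X 0 ^ d * Polynomial.aeval rr g)
      = C c * X 0 ^ d * (Polynomial.aeval rr (Polynomial.derivative g) * X 0) := by
  rw [mul_assoc, pderiv_C_mul, pderiv_mul, pderiv_pow, pderiv_aeval_rr,
    pderiv_X_of_ne (show (0:Fin 2) ≠ 1 by decide)]
  ring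

lemma pderiv_cX1 (c : ℂ) (t : ℕ) (g : Polynomial ℝ) :
    pderiv (1:Fin 2) (C c * X 1 ^ (t+1) * Polynomial.aeval rr g)
      = C c * (C ((t:ℂ)+1) * X 1 ^ t * Polynomial.aeval rr g
          + X 1 ^ (t+1) * (Polynomial.aeval rr (Polynomial.derivative g) * X 0)) := by
  rw [mul_assoc, pderiv_C_mul, pderiv_mul, pderiv_pow, pderiv_aeval_rr, pderiv_X_self]
  have hn : ((t+1 : ℕ) : MvPolynomial (Fin 2) ℂ) = C ((t:ℂ)+1) := by
    rw [show ((t:ℂ)+1) = ((t+1:ℕ):ℂ) by push_cast; ring]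
    exact (map_natCast (MvPolynomial.C : ℂ →+* MvPolynomial (Fin 2) ℂ) (t+1)).symm
  rw [Nat.add_sub_cancel, hn]
  ring

lemma zernikeQ_le (μ : ℝ) {k j : ℕ} (h : j ≤ k) :
    zernikeQ μ k j
      = C (((j.factorial : ℝ) / ((ascPochhammer ℝ j).eval (μ + 1)) : ℝ) : ℂ)
        * X 0 ^ (k - j) * Polynomial.aeval rr (jacobiG μ ((k - j : ℕ) : ℝ) j) := by
  rw [zernikeQ, if_pos h, key0]

lemma zernikeQ_gt (μ : ℝ) {k j : ℕ} (h : ¬ j ≤ k) :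
    zernikeQ μ k j
      = C (((k.factorial : ℝ) / ((ascPochhammer ℝ k).eval (μ + 1)) : ℝ) : ℂ)
        * X 1 ^ (j - k) * Polynomial.aeval rr (jacobiG μ ((j - k : ℕ) : ℝ) k) := by
  rw [zernikeQ, if_neg h, key0]

set_option maxHeartbeats 2000000 in
open MvPolynomial in
theorem zernike_ladder_Z8 (μ : ℝ) (k j : ℕ) :
    (μ > -1 → 1 ≤ k → 1 ≤ j →
      X 1 * pderiv (1 : Fin 2) (zernikeQ μ k j) - C (((j : ℝ)) : ℂ) * zernikeQ μ k j =
        C ((((k : ℝ) * (j : ℝ) / (μ + 1) : ℝ)) : ℂ) * zernikeQ (μ + 1) (k - 1) (j - 1)) ∧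
    (μ > 0 →
      (1 - X 0 * X 1) * (X 1 * pderiv (1 : Fin 2) (zernikeQ μ k j)) +
          (C ((((k : ℝ) + 1 : ℝ)) : ℂ) * (1 - X 0 * X 1) -
            C ((μ : ℂ)) * (X 0 * X 1)) * zernikeQ μ k j =
        -(C ((μ : ℂ)) * zernikeQ (μ - 1) (k + 1) (j + 1))) := by
  constructor
  · intro hμ hk hj
    obtain ⟨k', rfl⟩ : ∃ k', k = k'+1 := ⟨k-1, by omega⟩
    obtain ⟨j', rfl⟩ : ∃ j', j = j'+1 := ⟨j-1, by omega⟩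
    simp only [Nat.add_sub_cancel]
    by_cases h : j' + 1 ≤ k' + 1
    · have hjk : j' ≤ k' := by omega
      rw [zernikeQ_le μ h, zernikeQ_le (μ+1) hjk,
        show k' + 1 - (j'+1) = k' - j' by omega]
      rw [pderiv_cX0]
      have E := congrArg (Polynomial.aeval rr) (polyA μ (((k' - j' : ℕ)):ℝ) j')
      simp only [map_sub, map_mul, map_add, Polynomial.aeval_X, Polynomial.aeval_C,
        map_one, IsScalarTower.algebraMap_apply ℝ ℂ (MvPolynomial (Fin 2) ℂ),
        MvPolynomial.algebraMap_eq, Complex.coe_algebraMap] at E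
      simp only [Complex.ofReal_add, Complex.ofReal_one, Complex.ofReal_natCast,
        map_add, map_natCast, map_one] at E ⊢
      push_cast [Nat.cast_sub hjk] at E ⊢
      have hr : (((j'+1).factorial:ℝ) / ((ascPochhammer ℝ (j'+1)).eval (μ+1))) * ((k':ℝ)+1)
          = ((k':ℝ)+1) * ((j':ℝ)+1) / (μ+1) * ((j'.factorial:ℝ) / ((ascPochhammer ℝ j').eval (μ+1+1))) := by
        have p1 : (0:ℝ) < (ascPochhammer ℝ j').eval (μ+1+1) :=
          ascPochhammer_pos _ _ (by linarith)
        have p2 : μ + 1 ≠ 0 := by linarith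
        rw [poch_succ_left j' (μ+1), Nat.factorial_succ]
        push_cast
        field_simp
      have HC : (MvPolynomial.C (((j'+1).factorial:ℂ) / ((((ascPochhammer ℝ (j'+1)).eval (μ+1)):ℝ):ℂ))
            * (((j':MvPolynomial (Fin 2) ℂ)) + 1 + (((k':MvPolynomial (Fin 2) ℂ)) - ((j':MvPolynomial (Fin 2) ℂ)))) : MvPolynomial (Fin 2) ℂ)
          = MvPolynomial.C ((((k':ℂ)) + 1) * (((j':ℂ)) + 1) / (((μ:ℂ)) + 1))
            * MvPolynomial.C ((j'.factorial:ℂ) / ((((ascPochhammer ℝ j').eval (μ+1+1)):ℝ):ℂ)) := by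
        rw [show (((j':MvPolynomial (Fin 2) ℂ)) + 1 + (((k':MvPolynomial (Fin 2) ℂ)) - ((j':MvPolynomial (Fin 2) ℂ))) : MvPolynomial (Fin 2) ℂ)
            = MvPolynomial.C (((k':ℂ)) + 1) by rw [map_add, map_natCast, map_one]; ring]
        rw [← map_mul, ← map_mul]
        congr 1
        exact_mod_cast hr
      simp only [rr] at E ⊢
      linear_combination
        (MvPolynomial.C (((j'+1).factorial:ℂ) / ((((ascPochhammer ℝ (j'+1)).eval (μ+1)):ℝ):ℂ))
          * X 0 ^ (k'-j')) * E
        + (X 0 ^ (k'-j') * Polynomial.aeval ((X 0 * X 1 - 1 : MvPolynomial (Fin 2) ℂ)) (jacobiG (μ+1) ((k':ℝ) - (j':ℝ)) j')) * HC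
    · have hkj : ¬ j' ≤ k' := by omega
      obtain ⟨t, rfl⟩ : ∃ t, j' = k' + t + 1 := ⟨j'-k'-1, by omega⟩
      rw [zernikeQ_gt μ h, zernikeQ_gt (μ+1) hkj,
        show k' + t + 1 + 1 - (k'+1) = t + 1 by omega,
        show k' + t + 1 - k' = t + 1 by omega]
      rw [pderiv_cX1]
      have E := congrArg (Polynomial.aeval rr) (polyA μ (((t+1:ℕ)):ℝ) k')
      simp only [Complex.ofReal_add, Complex.ofReal_one, Complex.ofReal_natCast,
        map_sub, map_mul, map_add, Polynomial.aeval_X, Polynomial.aeval_C,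
        map_one, IsScalarTower.algebraMap_apply ℝ ℂ (MvPolynomial (Fin 2) ℂ),
        MvPolynomial.algebraMap_eq, Complex.coe_algebraMap, map_natCast] at E ⊢
      push_cast at E ⊢
      have hr : (((k'+1).factorial:ℝ) / ((ascPochhammer ℝ (k'+1)).eval (μ+1))) * ((k':ℝ)+1+((t:ℝ)+1))
          = ((k':ℝ)+1) * ((k':ℝ)+(t:ℝ)+1+1) / (μ+1) * ((k'.factorial:ℝ) / ((ascPochhammer ℝ k').eval (μ+1+1))) := by
        have p1 : (0:ℝ) < (ascPochhammer ℝ k').eval (μ+1+1) :=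
          ascPochhammer_pos _ _ (by linarith)
        have p2 : μ + 1 ≠ 0 := by linarith
        rw [poch_succ_left k' (μ+1), Nat.factorial_succ]
        push_cast
        field_simp
        ring
      have HC : (MvPolynomial.C (((k'+1).factorial:ℂ) / ((((ascPochhammer ℝ (k'+1)).eval (μ+1)):ℝ):ℂ))
            * (((k':MvPolynomial (Fin 2) ℂ)) + 1 + (((t:MvPolynomial (Fin 2) ℂ)) + 1)) : MvPolynomial (Fin 2) ℂ)
          = MvPolynomial.C ((((k':ℂ)) + 1) * (((k':ℂ)) + ((t:ℂ)) + 1 + 1) / (((μ:ℂ)) + 1))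
            * MvPolynomial.C ((k'.factorial:ℂ) / ((((ascPochhammer ℝ k').eval (μ+1+1)):ℝ):ℂ)) := by
        rw [show (((k':MvPolynomial (Fin 2) ℂ)) + 1 + (((t:MvPolynomial (Fin 2) ℂ)) + 1) : MvPolynomial (Fin 2) ℂ)
            = MvPolynomial.C (((k':ℂ)) + 1 + (((t:ℂ)) + 1)) by simp]
        rw [← map_mul, ← map_mul]
        congr 1
        exact_mod_cast hr
      simp only [rr] at E ⊢
      linear_combination
        (MvPolynomial.C (((k'+1).factorial:ℂ) / ((((ascPochhammer ℝ (k'+1)).eval (μ+1)):ℝ):ℂ))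
          * X 1 ^ (t+1)) * E
        + (X 1 ^ (t+1) * Polynomial.aeval ((X 0 * X 1 - 1 : MvPolynomial (Fin 2) ℂ)) (jacobiG (μ+1) ((t:ℝ)+1) k')) * HC
  · intro hμ
    by_cases h : j ≤ k
    · rw [zernikeQ_le μ h, zernikeQ_le (μ-1) (show j+1 ≤ k+1 by omega),
        show k+1-(j+1) = k-j by omega]
      rw [pderiv_cX0]
      have E := congrArg (Polynomial.aeval rr) (polyB μ (((k-j:ℕ)):ℝ) j)
      simp only [Complex.ofReal_add, Complex.ofReal_one, Complex.ofReal_natCast,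
        Complex.ofReal_neg, map_sub, map_mul, map_add, map_neg, Polynomial.aeval_X,
        Polynomial.aeval_C, map_one, IsScalarTower.algebraMap_apply ℝ ℂ (MvPolynomial (Fin 2) ℂ),
        MvPolynomial.algebraMap_eq, Complex.coe_algebraMap, map_natCast] at E ⊢
      push_cast [Nat.cast_sub h] at E ⊢
      have hr : ((j.factorial:ℝ) / ((ascPochhammer ℝ j).eval (μ+1))) * ((j:ℝ)+1)
          = μ * (((j+1).factorial:ℝ) / ((ascPochhammer ℝ (j+1)).eval (μ-1+1))) := by
        have p1 : (0:ℝ) < (ascPochhammer ℝ j).eval (μ+1) :=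
          ascPochhammer_pos _ _ (by linarith)
        have p2 : μ ≠ 0 := by linarith
        rw [show μ-1+1 = μ by ring, poch_succ_left j μ, Nat.factorial_succ]
        push_cast
        field_simp
      have HC : (MvPolynomial.C ((j.factorial:ℂ) / ((((ascPochhammer ℝ j).eval (μ+1)):ℝ):ℂ))
            * (((j:MvPolynomial (Fin 2) ℂ)) + 1) : MvPolynomial (Fin 2) ℂ)
          = MvPolynomial.C ((μ:ℂ))
            * MvPolynomial.C (((j+1).factorial:ℂ) / ((((ascPochhammer ℝ (j+1)).eval (μ-1+1)):ℝ):ℂ)) := by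
        rw [show (((j:MvPolynomial (Fin 2) ℂ)) + 1 : MvPolynomial (Fin 2) ℂ)
            = MvPolynomial.C (((j:ℂ)) + 1) by simp]
        rw [← map_mul, ← map_mul]
        congr 1
        exact_mod_cast hr
      simp only [rr] at E ⊢
      linear_combination
        (MvPolynomial.C ((j.factorial:ℂ) / ((((ascPochhammer ℝ j).eval (μ+1)):ℝ):ℂ))
          * X 0 ^ (k-j)) * E
        - (X 0 ^ (k-j) * Polynomial.aeval ((X 0 * X 1 - 1 : MvPolynomial (Fin 2) ℂ)) (jacobiG (μ-1) ((k:ℝ) - (j:ℝ)) (j+1))) * HC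
    · obtain ⟨t, rfl⟩ : ∃ t, j = k + t + 1 := ⟨j-k-1, by omega⟩
      rw [zernikeQ_gt μ h, zernikeQ_gt (μ-1) (show ¬ k+t+1+1 ≤ k+1 by omega),
        show k+t+1+1-(k+1) = t+1 by omega, show k+t+1-k = t+1 by omega]
      rw [pderiv_cX1]
      have E := congrArg (Polynomial.aeval rr) (polyB μ (((t+1:ℕ)):ℝ) k)
      simp only [Complex.ofReal_add, Complex.ofReal_one, Complex.ofReal_natCast,
        Complex.ofReal_neg, map_sub, map_mul, map_add, map_neg, Polynomial.aeval_X,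
        Polynomial.aeval_C, map_one, IsScalarTower.algebraMap_apply ℝ ℂ (MvPolynomial (Fin 2) ℂ),
        MvPolynomial.algebraMap_eq, Complex.coe_algebraMap, map_natCast] at E ⊢
      push_cast at E ⊢
      have hr : ((k.factorial:ℝ) / ((ascPochhammer ℝ k).eval (μ+1))) * ((k:ℝ)+1)
          = μ * (((k+1).factorial:ℝ) / ((ascPochhammer ℝ (k+1)).eval (μ-1+1))) := by
        have p1 : (0:ℝ) < (ascPochhammer ℝ k).eval (μ+1) :=
          ascPochhammer_pos _ _ (by linarith)
        have p2 : μ ≠ 0 := by linarith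
        rw [show μ-1+1 = μ by ring, poch_succ_left k μ, Nat.factorial_succ]
        push_cast
        field_simp
      have HC : (MvPolynomial.C ((k.factorial:ℂ) / ((((ascPochhammer ℝ k).eval (μ+1)):ℝ):ℂ))
            * (((k:MvPolynomial (Fin 2) ℂ)) + 1) : MvPolynomial (Fin 2) ℂ)
          = MvPolynomial.C ((μ:ℂ))
            * MvPolynomial.C (((k+1).factorial:ℂ) / ((((ascPochhammer ℝ (k+1)).eval (μ-1+1)):ℝ):ℂ)) := by
        rw [show (((k:MvPolynomial (Fin 2) ℂ)) + 1 : MvPolynomial (Fin 2) ℂ)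
            = MvPolynomial.C (((k:ℂ)) + 1) by simp]
        rw [← map_mul, ← map_mul]
        congr 1
        exact_mod_cast hr
      simp only [rr] at E ⊢
      linear_combination
        (MvPolynomial.C ((k.factorial:ℂ) / ((((ascPochhammer ℝ k).eval (μ+1)):ℝ):ℂ))
          * X 1 ^ (t+1)) * E
        - (X 1 ^ (t+1) * Polynomial.aeval ((X 0 * X 1 - 1 : MvPolynomial (Fin 2) ℂ)) (jacobiG (μ-1) ((t:ℝ)+1) (k+1))) * HC
end

section
/- Let μ > −1 and define the second-order operator L_μ = 2(1−zw) ∂²/∂z∂z̄ − (μ+1)(z ∂/∂z + w ∂/∂z̄) acting on bivariate polynomials in (z,w). Then for all integers k, j ≥ 0, L_μ Q^μ_{k,j}(z,w) = λ^μ_{k,j} Q^μ_{k,j}(z,w), where λ^μ_{k,j} = −2kj − (μ+1)(k+j). -/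
/-! ### Auxiliary material -/

open Polynomial in
noncomputable def zernA (α β : ℝ) (n k : ℕ) : ℝ :=
  (n.choose k : ℝ) * ((ascPochhammer ℝ (n - k)).eval ((k : ℝ) + α + 1)) *
    ((ascPochhammer ℝ k).eval ((n : ℝ) + α + β + 1))

open Polynomial in
noncomputable def zernS (α β : ℝ) (n : ℕ) : Polynomial ℝ :=
  ∑ k ∈ Finset.range (n + 1), C (zernA α β n k) * X ^ k

open Polynomial in
lemma zernA_rec (α β : ℝ) (n m : ℕ) :
    ((m:ℝ)+1) * ((m:ℝ)+α+1) * zernA α β n (m+1)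
      = ((n:ℝ) - (m:ℝ)) * ((n:ℝ)+(m:ℝ)+α+β+1) * zernA α β n m := by
  rcases lt_or_ge m n with hm | hm
  · obtain ⟨t, ht⟩ : ∃ t, n - m = t + 1 := ⟨n - m - 1, by omega⟩
    have ht' : n - (m+1) = t := by omega
    have hch : ((n.choose (m+1) : ℝ)) * ((m:ℝ)+1) = (n.choose m : ℝ) * ((n:ℝ) - (m:ℝ)) := by
      have := Nat.choose_succ_right_eq n m
      have hc : ((n.choose (m+1) * (m+1) : ℕ) : ℝ) = ((n.choose m * (n - m) : ℕ) : ℝ) := by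
        exact_mod_cast congrArg (Nat.cast (R := ℝ)) this
      push_cast [Nat.cast_sub hm.le] at hc
      linarith [hc]
    have hpl : ∀ x : ℝ, (ascPochhammer ℝ (t+1)).eval x
        = x * (ascPochhammer ℝ t).eval (x+1) := by
      intro x
      rw [ascPochhammer_succ_left]
      simp [eval_comp]
    have hpr : (ascPochhammer ℝ (m+1)).eval ((n:ℝ)+α+β+1)
        = (ascPochhammer ℝ m).eval ((n:ℝ)+α+β+1) * (((n:ℝ)+α+β+1) + m) := by
      rw [ascPochhammer_succ_right]
      simp
    unfold zernA
    rw [ht, ht', hpr, hpl ((m:ℝ)+α+1)]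
    push_cast
    rw [show ((m:ℝ)+1+α+1) = ((m:ℝ)+α+1)+1 from by ring]
    linear_combination (((m:ℝ)+α+1) * (ascPochhammer ℝ t).eval ((m:ℝ)+α+1+1) *
      (ascPochhammer ℝ m).eval ((n:ℝ)+α+β+1) * ((n:ℝ)+(m:ℝ)+α+β+1)) * hch
  · have h1 : zernA α β n (m+1) = 0 := by
      unfold zernA
      rw [Nat.choose_eq_zero_of_lt (by omega)]
      simp
    rcases eq_or_lt_of_le hm with he | hlt
    · rw [h1, ← he]
      ring
    · have h2 : zernA α β n m = 0 := by
        unfold zernA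
        rw [Nat.choose_eq_zero_of_lt hlt]
        simp
      rw [h1, h2]
      ring

open Polynomial in
lemma zernS_coeff (α β : ℝ) (n m : ℕ) : (zernS α β n).coeff m = zernA α β n m := by
  unfold zernS
  rw [finset_sum_coeff]
  simp only [coeff_C_mul, coeff_X_pow, mul_ite, mul_one, mul_zero]
  rw [Finset.sum_ite_eq (Finset.range (n+1)) m (fun k => zernA α β n k)]
  split_ifs with h
  · rfl
  · unfold zernA
    rw [Nat.choose_eq_zero_of_lt (by simp at h; omega)]
    simp

open Polynomial in
lemma theta_coeff (p : Polynomial ℝ) (m : ℕ) :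
    (X * derivative p).coeff m = (m : ℝ) * p.coeff m := by
  cases m with
  | zero => simp [mul_coeff_zero]
  | succ m =>
      rw [coeff_X_mul, coeff_derivative]
      push_cast
      ring

open Polynomial in
lemma zernS_ode (α β : ℝ) (n : ℕ) :
    (X^2 + X) * derivative (derivative (zernS α β n))
      + (C (α+1) + C (α+β+2) * X) * derivative (zernS α β n)
    = C ((n:ℝ)*((n:ℝ)+α+β+1)) * zernS α β n := by
  set S := zernS α β n with hS
  have hop : (X^2 + X) * derivative (derivative S) + (C (α+1) + C (α+β+2) * X) * derivative S
      = X * derivative (X * derivative S) + C (α+β+1) * (X * derivative S)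
        + derivative (X * derivative S + C α * S) := by
    simp only [derivative_add, derivative_mul, derivative_X, derivative_C, zero_mul, one_mul,
      C_add, C_1, map_ofNat]
    ring
  rw [hop]
  ext m
  rw [coeff_C_mul, coeff_add, coeff_add, theta_coeff, coeff_C_mul, theta_coeff,
    coeff_derivative, coeff_add, theta_coeff, coeff_C_mul, hS,
    zernS_coeff, zernS_coeff]
  push_cast
  linear_combination zernA_rec α β n m

open MvPolynomial

lemma my_algebraMap' (r : ℝ) :
    algebraMap ℝ (MvPolynomial (Fin 2) ℂ) r = C (r : ℂ) := by
  rw [IsScalarTower.algebraMap_apply ℝ ℂ (MvPolynomial (Fin 2) ℂ)]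
  rfl

lemma my_pderiv_comm (i j : Fin 2) (f : MvPolynomial (Fin 2) ℂ) :
    pderiv i (pderiv j f) = pderiv j (pderiv i f) := by
  induction f using MvPolynomial.induction_on with
  | C a => simp [pderiv_C]
  | add f g hf hg => simp [map_add, hf, hg]
  | mul_X f s hf =>
      have hi : ∀ (u : Fin 2), pderiv u (X s : MvPolynomial (Fin 2) ℂ)
          = C (if s = u then 1 else 0) := by
        intro u
        rcases eq_or_ne s u with h | h
        · subst h; simp
        · simp [pderiv_X_of_ne h, h]
      simp only [pderiv_mul, map_add, pderiv_mul, hi, pderiv_C, hf]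
      ring

lemma my_pderiv_aeval (i : Fin 2) (f : MvPolynomial (Fin 2) ℂ) (q : Polynomial ℝ) :
    pderiv i (Polynomial.aeval f q)
      = Polynomial.aeval f (Polynomial.derivative q) * pderiv i f := by
  induction q using Polynomial.induction_on with
  | C a => simp
  | add p q hp hq =>
      simp only [map_add, Polynomial.derivative_add, hp, hq]
      ring
  | monomial n a ih =>
      simp only [map_mul, map_pow, Polynomial.aeval_X, Polynomial.aeval_C,
        Polynomial.derivative_mul, Polynomial.derivative_C, Polynomial.derivative_X_pow,
        zero_mul, zero_add, map_natCast, Nat.add_sub_cancel]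
      rw [my_algebraMap' a, pderiv_C_mul, pderiv_pow, Nat.add_sub_cancel]
      push_cast
      ring

open Polynomial in
lemma zern_key (μ : ℝ) (m p : ℕ) (c : ℂ) (i i' : Fin 2) (hne : i ≠ i') (S : Polynomial ℝ)
    (hODE : (Polynomial.X^2 + Polynomial.X) * derivative (derivative S)
      + (Polynomial.C (μ+1) + Polynomial.C (μ+(m:ℝ)+2) * Polynomial.X) * derivative S
      = Polynomial.C ((p:ℝ)*((p:ℝ)+μ+(m:ℝ)+1)) * S) :
    MvPolynomial.C (2:ℂ) * (1 - X i * X i') *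
        pderiv i' (pderiv i (MvPolynomial.C c * (X i ^ m * Polynomial.aeval (X i * X i' - 1) S)))
      - MvPolynomial.C ((μ+1:ℝ):ℂ) *
        (X i * pderiv i (MvPolynomial.C c * (X i ^ m * Polynomial.aeval (X i * X i' - 1) S))
          + X i' * pderiv i' (MvPolynomial.C c * (X i ^ m * Polynomial.aeval (X i * X i' - 1) S)))
    = MvPolynomial.C (((-2*((m:ℝ)+(p:ℝ))*(p:ℝ) - (μ+1)*(((m:ℝ)+(p:ℝ))+(p:ℝ)) : ℝ)):ℂ) *
        (MvPolynomial.C c * (X i ^ m * Polynomial.aeval (X i * X i' - 1) S)) := by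
  set v : MvPolynomial (Fin 2) ℂ := X i * X i' - 1 with hv
  have hvi : pderiv i v = X i' := by
    simp [hv, pderiv_mul, pderiv_X_of_ne hne.symm]
  have hvi' : pderiv i' v = X i := by
    simp [hv, pderiv_mul, pderiv_X_of_ne hne]
  have hxm' : pderiv i' (X i ^ m : MvPolynomial (Fin 2) ℂ) = 0 := by
    rw [pderiv_pow]
    simp [pderiv_X_of_ne hne]
  have hx : pderiv i (X i ^ m : MvPolynomial (Fin 2) ℂ) * X i
      = (m : MvPolynomial (Fin 2) ℂ) * X i ^ m := by
    cases m with
    | zero => simp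
    | succ t =>
        rw [pderiv_pow, Nat.add_sub_cancel, pderiv_X_self, mul_one, mul_assoc, ← pow_succ]
  have hxx : pderiv i' (pderiv i (X i ^ m : MvPolynomial (Fin 2) ℂ)) = 0 := by
    rw [pderiv_pow, pderiv_X_self, mul_one]
    simp [pderiv_mul, pderiv_pow, pderiv_X_of_ne hne]
  have e0 : pderiv i (MvPolynomial.C c * (X i ^ m * Polynomial.aeval v S))
      = MvPolynomial.C c * (pderiv i (X i ^ m) * Polynomial.aeval v S
          + X i ^ m * (Polynomial.aeval v (derivative S) * X i')) := by
    rw [pderiv_C_mul, pderiv_mul, my_pderiv_aeval, hvi]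
  have e1 : pderiv i' (MvPolynomial.C c * (X i ^ m * Polynomial.aeval v S))
      = MvPolynomial.C c * (X i ^ m * (Polynomial.aeval v (derivative S) * X i)) := by
    rw [pderiv_C_mul, pderiv_mul, my_pderiv_aeval, hvi', hxm', zero_mul, zero_add]
  have e2 : pderiv i' (MvPolynomial.C c * (pderiv i (X i ^ m) * Polynomial.aeval v S
          + X i ^ m * (Polynomial.aeval v (derivative S) * X i')))
      = MvPolynomial.C c * (pderiv i (X i ^ m) * (Polynomial.aeval v (derivative S) * X i)
          + X i ^ m * ((Polynomial.aeval v (derivative (derivative S)) * X i) * X i'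
              + Polynomial.aeval v (derivative S))) := by
    simp only [pderiv_C_mul, pderiv_C, map_add, pderiv_mul, hxx, hxm', my_pderiv_aeval, hvi',
      pderiv_X_self, mul_one, zero_mul, zero_add, add_zero, mul_zero]
  have hA := congrArg (Polynomial.aeval v) hODE
  simp only [map_add, map_mul, map_pow, Polynomial.aeval_X, Polynomial.aeval_C,
    my_algebraMap'] at hA
  rw [e0, e2, e1]
  rw [hv] at hA ⊢
  push_cast at hA ⊢
  simp only [map_add, map_mul, map_sub, map_neg, map_one, map_ofNat, map_natCast] at hA ⊢
  linear_combination (-2 * MvPolynomial.C c * X i ^ m) * hA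
    + (2 * (1 - X i * X i') * MvPolynomial.C c * Polynomial.aeval (X i * X i' - 1) (derivative S)
        - (MvPolynomial.C (μ:ℂ) + 1) * MvPolynomial.C c
            * Polynomial.aeval (X i * X i' - 1) S) * hx

open Polynomial in
lemma aeval_jacobiP (α β : ℝ) (n : ℕ) (z w : MvPolynomial (Fin 2) ℂ) :
    Polynomial.aeval (2 * z * w - 1) (jacobiP α β n)
      = (n.factorial : ℝ)⁻¹ • Polynomial.aeval (z * w - 1) (zernS α β n) := by
  have h2 : (MvPolynomial.C ((2:ℂ)⁻¹)) * 2 = (1 : MvPolynomial (Fin 2) ℂ) := by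
    rw [show (2 : MvPolynomial (Fin 2) ℂ) = MvPolynomial.C 2 from (map_ofNat _ 2).symm,
      ← map_mul]
    norm_num
  have hphi : Polynomial.aeval (2 * z * w - 1)
      ((Polynomial.X - 1) * Polynomial.C (2⁻¹ : ℝ)) = z * w - 1 := by
    rw [map_mul, map_sub, Polynomial.aeval_X, map_one, Polynomial.aeval_C, my_algebraMap']
    push_cast
    linear_combination (z * w - 1) * h2
  unfold jacobiP zernS
  rw [map_smul, map_sum, map_sum]
  congr 1
  refine Finset.sum_congr rfl fun x _ => ?_
  rw [map_smul, map_pow, hphi, map_mul, map_pow, Polynomial.aeval_X, Polynomial.aeval_C,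
    my_algebraMap', Algebra.smul_def, my_algebraMap']
  rfl

open MvPolynomial in
theorem zernike_eigen (μ : ℝ) (hμ : μ > -1) (k j : ℕ) :
    C ((2 : ℂ)) * (1 - X 0 * X 1) *
          pderiv (1 : Fin 2) (pderiv (0 : Fin 2) (zernikeQ μ k j)) -
        C (((μ + 1 : ℝ)) : ℂ) *
          (X 0 * pderiv (0 : Fin 2) (zernikeQ μ k j) +
            X 1 * pderiv (1 : Fin 2) (zernikeQ μ k j)) =
      C (((-2 * (k : ℝ) * (j : ℝ) - (μ + 1) * ((k : ℝ) + (j : ℝ)) : ℝ)) : ℂ) *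
        zernikeQ μ k j := by
  by_cases h : j ≤ k
  · obtain ⟨m, rfl⟩ : ∃ m, k = m + j := ⟨k - j, by omega⟩
    have hkj : m + j - j = m := by omega
    set c' : ℂ := (((j.factorial : ℝ) / ((ascPochhammer ℝ j).eval (μ + 1)) : ℝ) : ℂ)
        * (((j.factorial : ℝ)⁻¹ : ℝ) : ℂ) with hc'
    have hQ : zernikeQ μ (m + j) j
        = MvPolynomial.C c' *
            (X 0 ^ m * Polynomial.aeval (X 0 * X 1 - 1) (zernS μ (m:ℝ) j)) := by
      simp only [zernikeQ, if_pos h, hkj]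
      rw [aeval_jacobiP, Algebra.smul_def, my_algebraMap', hc', map_mul]
      ring
    rw [hQ, my_pderiv_comm]
    have hkey := zern_key μ m j c' 0 1 (by decide) (zernS μ (m:ℝ) j) (zernS_ode μ (m:ℝ) j)
    rw [show ((-2 * ((m + j : ℕ) : ℝ) * (j : ℝ) - (μ + 1) * (((m + j : ℕ) : ℝ) + (j : ℝ)) : ℝ))
        = (-2*((m:ℝ)+(j:ℝ))*(j:ℝ) - (μ+1)*(((m:ℝ)+(j:ℝ))+(j:ℝ)) : ℝ) from by push_cast; ring]
    rw [my_pderiv_comm] at hkey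
    linear_combination hkey
  · obtain ⟨m, rfl⟩ : ∃ m, j = m + k := ⟨j - k, by omega⟩
    have hkk : m + k - k = m := by omega
    set c' : ℂ := (((k.factorial : ℝ) / ((ascPochhammer ℝ k).eval (μ + 1)) : ℝ) : ℂ)
        * (((k.factorial : ℝ)⁻¹ : ℝ) : ℂ) with hc'
    have hQ : zernikeQ μ k (m + k)
        = MvPolynomial.C c' *
            (X 1 ^ m * Polynomial.aeval (X 1 * X 0 - 1) (zernS μ (m:ℝ) k)) := by
      simp only [zernikeQ, if_neg h, hkk]
      rw [show (2 * X 0 * X 1 - 1 : MvPolynomial (Fin 2) ℂ) = 2 * X 1 * X 0 - 1 from by ring]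
      rw [aeval_jacobiP, Algebra.smul_def, my_algebraMap', hc', map_mul]
      ring
    rw [hQ]
    have hkey := zern_key μ m k c' 1 0 (by decide) (zernS μ (m:ℝ) k) (zernS_ode μ (m:ℝ) k)
    rw [show ((-2 * (k : ℝ) * ((m + k : ℕ) : ℝ) - (μ + 1) * ((k : ℝ) + ((m + k : ℕ) : ℝ)) : ℝ))
        = (-2*((m:ℝ)+(k:ℝ))*(k:ℝ) - (μ+1)*(((m:ℝ)+(k:ℝ))+(k:ℝ)) : ℝ) from by push_cast; ring]
    rw [my_pderiv_comm]
    linear_combination hkey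
end

section
/- Define the bivariate polynomials Q^{−1}_{0,0}(z,w) = 1 and, for integers k, j ≥ 1, Q^{−1}_{k,j}(z,w) = (1−zw) Q^1_{k−1,j−1}(z,w). Then these polynomials satisfy 2(1−zw) ∂²/∂z∂z̄ Q^{−1}_{k,j}(z,w) = −2kj · Q^{−1}_{k,j}(z,w), i.e. L_{−1} Q^{−1}_{k,j} = λ^{−1}_{k,j} Q^{−1}_{k,j} with λ^{−1}_{k,j} = −2kj, where L_{−1} = 2(1−zw) ∂²/∂z∂z̄. -/
open Polynomial in
noncomputable def zCoef (α β : ℝ) (n k : ℕ) : ℝ :=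
  (n.choose k : ℝ) * ((ascPochhammer ℝ (n - k)).eval ((k : ℝ) + α + 1)) *
    ((ascPochhammer ℝ k).eval ((n : ℝ) + α + β + 1))

lemma zCoef_rec (α β : ℝ) (n k : ℕ) (h : k < n) :
    ((k : ℝ) + 1) * ((k : ℝ) + α + 1) * zCoef α β n (k + 1) =
      ((n : ℝ) - k) * ((n : ℝ) + k + α + β + 1) * zCoef α β n k := by
  have h1 : n - k = (n - (k+1)) + 1 := by omega
  have hch : ((n.choose (k+1) * (k+1) : ℕ) : ℝ) = ((n.choose k * (n - k) : ℕ) : ℝ) := by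
    rw [Nat.choose_succ_right_eq]
  push_cast [Nat.cast_sub h.le] at hch
  have hp1 : (ascPochhammer ℝ (n - k)).eval ((k : ℝ) + α + 1) =
      ((k : ℝ) + α + 1) * (ascPochhammer ℝ (n - (k+1))).eval ((k : ℝ) + α + 2) := by
    rw [h1, ascPochhammer_succ_left]
    simp only [Polynomial.eval_mul, Polynomial.eval_X, Polynomial.eval_comp,
      Polynomial.eval_add, Polynomial.eval_one]
    ring_nf
  have hp2 : (ascPochhammer ℝ (k+1)).eval ((n : ℝ) + α + β + 1) =
      (ascPochhammer ℝ k).eval ((n : ℝ) + α + β + 1) * ((n : ℝ) + α + β + 1 + k) := by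
    rw [ascPochhammer_succ_right]
    simp
  unfold zCoef
  rw [hp1, hp2]
  push_cast
  have : ((k:ℝ) + 1 + α + 1) = (k:ℝ) + α + 2 := by ring
  rw [this]
  linear_combination ((k:ℝ)+α+1) *
    (Polynomial.eval ((k:ℝ) + α + 2) (ascPochhammer ℝ (n - (k + 1)))) *
    (Polynomial.eval ((n:ℝ) + α + β + 1) (ascPochhammer ℝ k)) * ((n:ℝ)+α+β+1+(k:ℝ)) * hch

noncomputable def zP (α β : ℝ) (n : ℕ) : Polynomial ℝ :=
  ∑ k ∈ Finset.range (n + 1), Polynomial.C (zCoef α β n k) * Polynomial.X ^ k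

noncomputable def zD (α β : ℝ) (n m : ℕ) : ℝ := if m ≤ n then zCoef α β n m else 0

lemma zP_coeff (α β : ℝ) (n m : ℕ) : (zP α β n).coeff m = zD α β n m := by
  unfold zP zD
  rw [Polynomial.finset_sum_coeff]
  simp only [Polynomial.coeff_C_mul, Polynomial.coeff_X_pow]
  rw [Finset.sum_congr rfl (fun k _ => by rw [mul_ite, mul_one, mul_zero])]
  rw [Finset.sum_ite_eq (Finset.range (n+1)) m (zCoef α β n)]
  simp [Nat.lt_succ_iff]

lemma zD_rec (α β : ℝ) (n m : ℕ) :
    ((m : ℝ) + 1) * ((m : ℝ) + α + 1) * zD α β n (m + 1) +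
      (m : ℝ) * ((m : ℝ) + α + β + 1) * zD α β n m =
    (n : ℝ) * ((n : ℝ) + α + β + 1) * zD α β n m := by
  unfold zD
  rcases lt_trichotomy m n with h | h | h
  · rw [if_pos (by omega), if_pos (by omega)]
    linear_combination zCoef_rec α β n m h
  · subst h
    rw [if_pos le_rfl, if_neg (by omega)]
    ring
  · rw [if_neg (by omega), if_neg (by omega)]
    ring

open Polynomial in
lemma zP_ode (α β : ℝ) (n : ℕ) :
    X * (X * derivative (derivative (zP α β n)))
      + X * derivative (derivative (zP α β n))
      + C (α + β + 2) * (X * derivative (zP α β n))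
      + C (α + 1) * derivative (zP α β n)
    = C ((n : ℝ) * ((n : ℝ) + α + β + 1)) * zP α β n := by
  have hd := zD_rec α β n
  ext m
  simp only [coeff_add, coeff_C_mul]
  rcases m with _ | _ | m
  · simp only [mul_coeff_zero, coeff_X_zero, zero_mul, coeff_derivative, zP_coeff]
    push_cast
    linear_combination hd 0
  · simp only [coeff_X_mul, mul_coeff_zero, coeff_X_zero, zero_mul, coeff_derivative,
      zP_coeff]
    push_cast
    linear_combination hd 1
  · simp only [coeff_X_mul, coeff_derivative, zP_coeff]
    simp only [show m + 1 + 1 = m + 2 from rfl, show m + 2 + 1 = m + 3 from rfl]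
    have h2 := hd (m + 2)
    simp only [show m + 2 + 1 = m + 3 from rfl] at h2
    push_cast at h2 ⊢
    linear_combination h2

open Polynomial in
lemma jacobiP_eq (α β : ℝ) (n : ℕ) :
    jacobiP α β n =
      C ((n.factorial : ℝ)⁻¹) * (zP α β n).comp ((X - 1) * C (2⁻¹ : ℝ)) := by
  unfold jacobiP zP
  rw [smul_eq_C_mul]
  congr 1
  unfold zCoef
  rw [Polynomial.comp, Polynomial.eval₂_finset_sum]
  simp [smul_eq_C_mul, Polynomial.eval₂_mul, Polynomial.eval₂_pow]

open MvPolynomial in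
lemma pd_aeval (i : Fin 2) (v : MvPolynomial (Fin 2) ℂ) (q : Polynomial ℝ) :
    pderiv i (Polynomial.aeval v q) =
      Polynomial.aeval v (Polynomial.derivative q) * pderiv i v := by
  rw [← Derivation.restrictScalars_apply ℝ (pderiv i) (Polynomial.aeval v q),
    Derivation.comp_aeval_eq, smul_eq_mul, Derivation.restrictScalars_apply]

open MvPolynomial in
lemma pd0s : pderiv (0 : Fin 2) ((X 0 * X 1 - 1 : MvPolynomial (Fin 2) ℂ)) = X 1 := by
  simp [pderiv_mul, pderiv_X_of_ne (show (1:Fin 2) ≠ 0 by decide)]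

open MvPolynomial in
lemma pd1s : pderiv (1 : Fin 2) ((X 0 * X 1 - 1 : MvPolynomial (Fin 2) ℂ)) = X 0 := by
  simp [pderiv_mul, pderiv_X_of_ne (show (0:Fin 2) ≠ 1 by decide)]

open MvPolynomial in
lemma pd_natCast (i : Fin 2) (r : ℕ) :
    pderiv i ((r : ℕ) : MvPolynomial (Fin 2) ℂ) = 0 := by
  rw [← map_natCast (MvPolynomial.C : ℂ →+* MvPolynomial (Fin 2) ℂ) r, pderiv_C]

open MvPolynomial in
lemma zKey (m n : ℕ) (q : Polynomial ℝ)
    (hode : (Polynomial.X : Polynomial ℝ) * (Polynomial.X * Polynomial.derivative (Polynomial.derivative q))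
        + Polynomial.X * Polynomial.derivative (Polynomial.derivative q)
        + Polynomial.C ((1 : ℝ) + (m : ℝ) + 2) * (Polynomial.X * Polynomial.derivative q)
        + Polynomial.C ((1 : ℝ) + 1) * Polynomial.derivative q
      = Polynomial.C ((n : ℝ) * ((n : ℝ) + 1 + (m : ℝ) + 1)) * q) :
    pderiv (1 : Fin 2) (pderiv (0 : Fin 2)
        ((1 - MvPolynomial.X 0 * MvPolynomial.X 1) *
          (MvPolynomial.X 0 ^ m *
            Polynomial.aeval (MvPolynomial.X 0 * MvPolynomial.X 1 - 1 : MvPolynomial (Fin 2) ℂ) q))) =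
      MvPolynomial.C (((-((n : ℝ) + 1) * ((n : ℝ) + (m : ℝ) + 1) : ℝ)) : ℂ) *
        (MvPolynomial.X 0 ^ m *
          Polynomial.aeval (MvPolynomial.X 0 * MvPolynomial.X 1 - 1 : MvPolynomial (Fin 2) ℂ) q) := by
  have hA := congrArg (Polynomial.aeval (MvPolynomial.X 0 * MvPolynomial.X 1 - 1 :
    MvPolynomial (Fin 2) ℂ)) hode
  simp only [map_add, map_mul, Polynomial.aeval_X, Polynomial.aeval_C] at hA
  rcases m with _ | m
  · simp only [pow_zero, one_mul, map_sub, map_add, map_neg, map_one, map_zero,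
      pderiv_mul, pd_aeval, pd0s, pd1s,
      Derivation.map_one_eq_zero, pderiv_X_self, pderiv_one,
      pderiv_X_of_ne (show (1:Fin 2) ≠ 0 by decide),
      pderiv_X_of_ne (show (0:Fin 2) ≠ 1 by decide)]
    push_cast
    simp only [map_add, map_mul, map_one, map_zero, map_neg, map_natCast, map_ofNat,
      Nat.cast_zero] at hA ⊢
    linear_combination -hA
  · simp only [map_sub, map_add, map_neg, map_one, map_zero,
      pderiv_mul, pd_aeval, pd0s, pd1s, pderiv_pow, Nat.add_sub_cancel,
      Derivation.map_one_eq_zero, pderiv_X_self, pderiv_one,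
      pderiv_X_of_ne (show (1:Fin 2) ≠ 0 by decide),
      pderiv_X_of_ne (show (0:Fin 2) ≠ 1 by decide)]
    simp only [pd_natCast, Derivation.map_one_eq_zero]
    push_cast
    simp only [map_add, map_mul, map_one, map_zero, map_neg, map_natCast, map_ofNat,
      Nat.cast_zero, pd_natCast, Derivation.map_one_eq_zero] at hA ⊢
    push_cast at hA ⊢
    linear_combination (-(MvPolynomial.X 0 ^ (m+1) : MvPolynomial (Fin 2) ℂ)) * hA

open MvPolynomial in
lemma zKey' (m n : ℕ) (q : Polynomial ℝ)
    (hode : (Polynomial.X : Polynomial ℝ) * (Polynomial.X * Polynomial.derivative (Polynomial.derivative q))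
        + Polynomial.X * Polynomial.derivative (Polynomial.derivative q)
        + Polynomial.C ((1 : ℝ) + (m : ℝ) + 2) * (Polynomial.X * Polynomial.derivative q)
        + Polynomial.C ((1 : ℝ) + 1) * Polynomial.derivative q
      = Polynomial.C ((n : ℝ) * ((n : ℝ) + 1 + (m : ℝ) + 1)) * q) :
    pderiv (1 : Fin 2) (pderiv (0 : Fin 2)
        ((1 - MvPolynomial.X 0 * MvPolynomial.X 1) *
          (MvPolynomial.X 1 ^ m *
            Polynomial.aeval (MvPolynomial.X 0 * MvPolynomial.X 1 - 1 : MvPolynomial (Fin 2) ℂ) q))) =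
      MvPolynomial.C (((-((n : ℝ) + 1) * ((n : ℝ) + (m : ℝ) + 1) : ℝ)) : ℂ) *
        (MvPolynomial.X 1 ^ m *
          Polynomial.aeval (MvPolynomial.X 0 * MvPolynomial.X 1 - 1 : MvPolynomial (Fin 2) ℂ) q) := by
  have hA := congrArg (Polynomial.aeval (MvPolynomial.X 0 * MvPolynomial.X 1 - 1 :
    MvPolynomial (Fin 2) ℂ)) hode
  simp only [map_add, map_mul, Polynomial.aeval_X, Polynomial.aeval_C] at hA
  rcases m with _ | m
  · simp only [pow_zero, one_mul, map_sub, map_add, map_neg, map_one, map_zero,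
      pderiv_mul, pd_aeval, pd0s, pd1s,
      Derivation.map_one_eq_zero, pderiv_X_self, pderiv_one,
      pderiv_X_of_ne (show (1:Fin 2) ≠ 0 by decide),
      pderiv_X_of_ne (show (0:Fin 2) ≠ 1 by decide)]
    push_cast
    simp only [map_add, map_mul, map_one, map_zero, map_neg, map_natCast, map_ofNat,
      Nat.cast_zero] at hA ⊢
    linear_combination -hA
  · simp only [map_sub, map_add, map_neg, map_one, map_zero,
      pderiv_mul, pd_aeval, pd0s, pd1s, pderiv_pow, Nat.add_sub_cancel,
      Derivation.map_one_eq_zero, pderiv_X_self, pderiv_one,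
      pderiv_X_of_ne (show (1:Fin 2) ≠ 0 by decide),
      pderiv_X_of_ne (show (0:Fin 2) ≠ 1 by decide)]
    simp only [pd_natCast, Derivation.map_one_eq_zero]
    push_cast
    simp only [map_add, map_mul, map_one, map_zero, map_neg, map_natCast, map_ofNat,
      Nat.cast_zero, pd_natCast, Derivation.map_one_eq_zero] at hA ⊢
    push_cast at hA ⊢
    linear_combination (-(MvPolynomial.X 1 ^ (m+1) : MvPolynomial (Fin 2) ℂ)) * hA

open MvPolynomial in
lemma algC (r : ℝ) :
    algebraMap ℝ (MvPolynomial (Fin 2) ℂ) r = MvPolynomial.C ((r : ℝ) : ℂ) := by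
  rw [IsScalarTower.algebraMap_apply ℝ ℂ (MvPolynomial (Fin 2) ℂ)]
  simp [MvPolynomial.algebraMap_eq]

open MvPolynomial in
lemma hpt :
    Polynomial.aeval (2 * X 0 * X 1 - 1 : MvPolynomial (Fin 2) ℂ)
      ((Polynomial.X - 1) * Polynomial.C (2⁻¹ : ℝ)) = X 0 * X 1 - 1 := by
  have h2 : (algebraMap ℝ (MvPolynomial (Fin 2) ℂ)) 2⁻¹ * 2 = 1 := by
    rw [show (2 : MvPolynomial (Fin 2) ℂ) = algebraMap ℝ _ 2 from
      (map_ofNat (algebraMap ℝ (MvPolynomial (Fin 2) ℂ)) 2).symm, ← map_mul]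
    norm_num
  simp only [map_mul, map_sub, Polynomial.aeval_X, Polynomial.aeval_C, map_one]
  linear_combination (X 0 * X 1 - 1) * h2

open MvPolynomial in
theorem zernike_eigen_neg_one :
    (C ((2 : ℂ)) * (1 - X 0 * X 1) *
        pderiv (1 : Fin 2) (pderiv (0 : Fin 2) (1 : MvPolynomial (Fin 2) ℂ)) =
      C (((-2 * (0 : ℝ) * (0 : ℝ) : ℝ)) : ℂ) * (1 : MvPolynomial (Fin 2) ℂ)) ∧
    ∀ k j : ℕ, 1 ≤ k → 1 ≤ j →
      C ((2 : ℂ)) * (1 - X 0 * X 1) *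
          pderiv (1 : Fin 2)
            (pderiv (0 : Fin 2) ((1 - X 0 * X 1) * zernikeQ 1 (k - 1) (j - 1))) =
        C (((-2 * (k : ℝ) * (j : ℝ) : ℝ)) : ℂ) *
          ((1 - X 0 * X 1) * zernikeQ 1 (k - 1) (j - 1)) := by
  constructor
  · simp
  · intro k j hk hj
    obtain ⟨j', rfl⟩ : ∃ j', j = j' + 1 := ⟨j - 1, by omega⟩
    obtain ⟨k', rfl⟩ : ∃ k', k = k' + 1 := ⟨k - 1, by omega⟩
    simp only [Nat.add_sub_cancel]
    by_cases hjk : j' ≤ k'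
    · obtain ⟨m, rfl⟩ : ∃ m, k' = j' + m := ⟨k' - j', by omega⟩
      unfold zernikeQ
      rw [if_pos (Nat.le_add_right _ _)]
      simp only [Nat.add_sub_cancel_left]
      rw [jacobiP_eq 1 (m : ℝ) j', Polynomial.aeval_mul, Polynomial.aeval_C, Polynomial.aeval_comp, hpt,
        algC]
      rw [show (1 - X 0 * X 1) *
            (MvPolynomial.C (((j'.factorial : ℝ) / ((ascPochhammer ℝ j').eval (1 + 1)) : ℝ) : ℂ) *
              X 0 ^ m *
              (MvPolynomial.C (((j'.factorial : ℝ)⁻¹ : ℝ) : ℂ) *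
                Polynomial.aeval (X 0 * X 1 - 1 : MvPolynomial (Fin 2) ℂ) (zP 1 (m : ℝ) j'))) =
          MvPolynomial.C ((((j'.factorial : ℝ) / ((ascPochhammer ℝ j').eval (1 + 1)) : ℝ) : ℂ) *
              (((j'.factorial : ℝ)⁻¹ : ℝ) : ℂ)) *
            ((1 - X 0 * X 1) *
              (X 0 ^ m * Polynomial.aeval (X 0 * X 1 - 1 : MvPolynomial (Fin 2) ℂ)
                (zP 1 (m : ℝ) j'))) from by rw [map_mul]; ring]
      rw [pderiv_C_mul, pderiv_C_mul, zKey m j' (zP 1 (m : ℝ) j') (zP_ode 1 (m : ℝ) j')]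
      have hc : (MvPolynomial.C (2 : ℂ) : MvPolynomial (Fin 2) ℂ) *
          MvPolynomial.C (((-((j' : ℝ) + 1) * ((j' : ℝ) + (m : ℝ) + 1) : ℝ)) : ℂ) =
          MvPolynomial.C (((-2 * ((j' + m + 1 : ℕ) : ℝ) * ((j' + 1 : ℕ) : ℝ) : ℝ)) : ℂ) := by
        rw [← map_mul]
        congr 1
        push_cast
        ring
      linear_combination (MvPolynomial.C ((((j'.factorial : ℝ) /
          ((ascPochhammer ℝ j').eval (1 + 1)) : ℝ) : ℂ) * (((j'.factorial : ℝ)⁻¹ : ℝ) : ℂ)) *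
        ((1 - X 0 * X 1) *
          (X 0 ^ m * Polynomial.aeval (X 0 * X 1 - 1 : MvPolynomial (Fin 2) ℂ)
            (zP 1 (m : ℝ) j')))) * hc
    · obtain ⟨m, rfl⟩ : ∃ m, j' = k' + m := ⟨j' - k', by omega⟩
      unfold zernikeQ
      rw [if_neg hjk]
      simp only [Nat.add_sub_cancel_left]
      rw [jacobiP_eq 1 (m : ℝ) k', Polynomial.aeval_mul, Polynomial.aeval_C, Polynomial.aeval_comp, hpt,
        algC]
      rw [show (1 - X 0 * X 1) *
            (MvPolynomial.C (((k'.factorial : ℝ) / ((ascPochhammer ℝ k').eval (1 + 1)) : ℝ) : ℂ) *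
              X 1 ^ m *
              (MvPolynomial.C (((k'.factorial : ℝ)⁻¹ : ℝ) : ℂ) *
                Polynomial.aeval (X 0 * X 1 - 1 : MvPolynomial (Fin 2) ℂ) (zP 1 (m : ℝ) k'))) =
          MvPolynomial.C ((((k'.factorial : ℝ) / ((ascPochhammer ℝ k').eval (1 + 1)) : ℝ) : ℂ) *
              (((k'.factorial : ℝ)⁻¹ : ℝ) : ℂ)) *
            ((1 - X 0 * X 1) *
              (X 1 ^ m * Polynomial.aeval (X 0 * X 1 - 1 : MvPolynomial (Fin 2) ℂ)
                (zP 1 (m : ℝ) k'))) from by rw [map_mul]; ring]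
      rw [pderiv_C_mul, pderiv_C_mul, zKey' m k' (zP 1 (m : ℝ) k') (zP_ode 1 (m : ℝ) k')]
      have hc : (MvPolynomial.C (2 : ℂ) : MvPolynomial (Fin 2) ℂ) *
          MvPolynomial.C (((-((k' : ℝ) + 1) * ((k' : ℝ) + (m : ℝ) + 1) : ℝ)) : ℂ) =
          MvPolynomial.C (((-2 * ((k' + 1 : ℕ) : ℝ) * ((k' + m + 1 : ℕ) : ℝ) : ℝ)) : ℂ) := by
        rw [← map_mul]
        congr 1
        push_cast
        ring
      linear_combination (MvPolynomial.C ((((k'.factorial : ℝ) /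
          ((ascPochhammer ℝ k').eval (1 + 1)) : ℝ) : ℂ) * (((k'.factorial : ℝ)⁻¹ : ℝ) : ℂ)) *
        ((1 - X 0 * X 1) *
          (X 1 ^ m * Polynomial.aeval (X 0 * X 1 - 1 : MvPolynomial (Fin 2) ℂ)
            (zP 1 (m : ℝ) k')))) * hc
end

section
/- Let μ > −1 and k, j ≥ 0 be integers. The complex generalized Zernike polynomials satisfy the three-term relations: (k+j+μ+1) z Q^μ_{k,j}(z,w) = (k+μ+1) Q^μ_{k+1,j}(z,w) + j Q^μ_{k,j−1}(z,w), and (k+j+μ+1) w Q^μ_{k,j}(z,w) = (j+μ+1) Q^μ_{k,j+1}(z,w) + k Q^μ_{k−1,j}(z,w), where the terms with coefficient j (respectively k) are absent when j = 0 (respectively k = 0). These are identities of bivariate polynomials in (z,w). -/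
namespace ZernikeAux

lemma asc_succ_left (n : ℕ) (x : ℝ) :
    (ascPochhammer ℝ (n+1)).eval x = x * (ascPochhammer ℝ n).eval (x+1) := by
  rw [ascPochhammer_succ_left, Polynomial.eval_mul, Polynomial.eval_X, Polynomial.eval_comp,
    Polynomial.eval_add, Polynomial.eval_X, Polynomial.eval_one]

lemma asc_add (a b : ℕ) (x : ℝ) :
    (ascPochhammer ℝ (a+b)).eval x
      = (ascPochhammer ℝ a).eval x * (ascPochhammer ℝ b).eval (x + a) := by
  rw [← ascPochhammer_mul, Polynomial.eval_mul, Polynomial.eval_comp, Polynomial.eval_add,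
    Polynomial.eval_X, Polynomial.eval_natCast]

noncomputable def zc (μ : ℝ) (m i : ℕ) (M : ℝ) : ℝ :=
  (m.choose i : ℝ) * (ascPochhammer ℝ i).eval (M + μ + 1) / (ascPochhammer ℝ i).eval (μ + 1)

noncomputable def zsum (μ : ℝ) (m : ℕ) (M : ℝ) : Polynomial ℝ :=
  ∑ i ∈ Finset.range (m + 1), zc μ m i M • ((Polynomial.X - 1) * Polynomial.C (2⁻¹ : ℝ)) ^ i

noncomputable def vpoly : Polynomial ℝ := (Polynomial.X - 1) * Polynomial.C (2⁻¹ : ℝ) + 1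

lemma vpoly_def : vpoly = (Polynomial.X - 1) * Polynomial.C (2⁻¹ : ℝ) + 1 := rfl

lemma zc_zero (μ : ℝ) (m : ℕ) (M : ℝ) : zc μ m 0 M = 1 := by
  simp [zc]

lemma zsum_zero (μ : ℝ) (M : ℝ) : zsum μ 0 M = 1 := by
  simp [zsum, zc]

lemma choose_cast (j i : ℕ) :
    (j : ℝ) * (((j-1).choose i : ℕ) : ℝ) = ((j : ℝ) - i) * (j.choose i : ℝ) := by
  cases j with
  | zero =>
    cases i with
    | zero => simp
    | succ n => simp
  | succ m =>
    by_cases h : i ≤ m + 1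
    · have h0 := Nat.choose_mul_succ_eq m i
      have h1 : (((m + 1 - i : ℕ)) : ℝ) = ((m:ℝ) + 1) - i := by
        push_cast [Nat.cast_sub h]; ring
      have h2 : ((Nat.choose m i : ℕ) : ℝ) * ((m:ℝ)+1)
          = ((Nat.choose (m+1) i : ℕ) : ℝ) * (((m+1-i : ℕ)):ℝ) := by
        exact_mod_cast congrArg (Nat.cast : ℕ → ℝ) h0
      rw [h1] at h2
      simp only [Nat.add_sub_cancel]
      push_cast
      linear_combination h2
    · push_neg at h
      rw [Nat.choose_eq_zero_of_lt (by omega), Nat.choose_eq_zero_of_lt (by omega)]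
      simp

lemma key1 (μ : ℝ) (hμ : 0 < μ + 1) (j i : ℕ) (K : ℝ) (hK : 0 ≤ K) :
    (K + j + μ + 1) * zc μ j i K
      = (K + μ + 1) * zc μ j i (K + 1) + (j : ℝ) * zc μ (j-1) i K := by
  have hD : (0:ℝ) < (ascPochhammer ℝ i).eval (μ+1) := ascPochhammer_pos i _ hμ
  have hKμ : (0:ℝ) < K + μ + 1 := by linarith
  have h1 : (ascPochhammer ℝ i).eval (K+1+μ+1)
      = (ascPochhammer ℝ i).eval (K+μ+1) * (K+μ+1+i) / (K+μ+1) := by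
    have a := asc_succ_left i (K+μ+1)
    have b := ascPochhammer_succ_eval i (K+μ+1)
    rw [show K+1+μ+1 = K+μ+1+1 by ring]
    rw [eq_div_iff hKμ.ne']
    linear_combination b - a
  rcases Nat.eq_zero_or_pos j with hj | hj
  · subst hj
    cases i with
    | zero => simp [zc]
    | succ n => simp [zc]
  · have hj' : (j:ℝ) ≠ 0 := by positivity
    have h2 : (((j-1).choose i : ℕ) : ℝ) = ((j:ℝ) - i) * (j.choose i : ℝ) / j := by
      rw [eq_div_iff hj']
      linear_combination choose_cast j i
    rw [zc, zc, zc, h1, h2]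
    field_simp
    ring

lemma key2 (μ : ℝ) (hμ : 0 < μ + 1) (k i : ℕ) (hi : i ≤ k) (J : ℝ) :
    (J + k + μ + 1) * (zc μ k i J + zc μ k (i+1) J)
      = ((k:ℝ) + μ + 1) * zc μ (k+1) (i+1) J + J * zc μ k (i+1) (J - 1) := by
  have hD : (0:ℝ) < (ascPochhammer ℝ i).eval (μ+1) := ascPochhammer_pos i _ hμ
  have hi1 : (0:ℝ) < μ + 1 + i := by
    have : (0:ℝ) ≤ i := Nat.cast_nonneg i
    linarith
  have hDi1 : (ascPochhammer ℝ (i+1)).eval (μ+1)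
      = (ascPochhammer ℝ i).eval (μ+1) * (μ+1+i) := by
    have := ascPochhammer_succ_eval i (μ+1)
    linarith [this]
  have hP : (ascPochhammer ℝ (i+1)).eval (J+μ+1)
      = (ascPochhammer ℝ i).eval (J+μ+1) * (J+μ+1+i) := by
    have := ascPochhammer_succ_eval i (J+μ+1)
    linarith [this]
  have hP' : (ascPochhammer ℝ (i+1)).eval (J-1+μ+1)
      = (J+μ) * (ascPochhammer ℝ i).eval (J+μ+1) := by
    have := asc_succ_left i (J+μ)
    rw [show J-1+μ+1 = J+μ by ring, this]
  have hPas : (((k+1).choose (i+1) : ℕ) : ℝ) = (k.choose i : ℝ) + (k.choose (i+1) : ℝ) := by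
    push_cast [Nat.choose_succ_succ' k i]
    ring
  have h4 : ((k.choose (i+1) : ℕ) : ℝ) = (k.choose i : ℝ) * ((k:ℝ) - i) / ((i:ℝ)+1) := by
    have h0 := Nat.choose_succ_right_eq k i
    have hc : ((k - i : ℕ) : ℝ) = (k:ℝ) - i := by push_cast [Nat.cast_sub hi]; ring
    rw [eq_div_iff (by positivity : ((i:ℝ)+1) ≠ 0)]
    have := congrArg (Nat.cast : ℕ → ℝ) h0
    push_cast at this
    rw [hc] at this
    linear_combination this
  rw [zc, zc, zc, zc, hDi1, hP, hP', hPas, h4]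
  field_simp
  ring

lemma zsum_ext (μ : ℝ) (m : ℕ) (M : ℝ) (n : ℕ) (h : m + 1 ≤ n) :
    zsum μ m M
      = ∑ i ∈ Finset.range n, zc μ m i M • ((Polynomial.X - 1) * Polynomial.C (2⁻¹ : ℝ)) ^ i := by
  refine Finset.sum_subset (Finset.range_subset_range.mpr h) (fun x hx hxn => ?_)
  rw [Finset.mem_range] at hx
  rw [Finset.mem_range, not_lt] at hxn
  rw [zc, Nat.choose_eq_zero_of_lt (by omega)]
  simp

lemma three_term_C (μ : ℝ) (hμ : 0 < μ + 1) (j : ℕ) (K : ℝ) (hK : 0 ≤ K) :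
    (K + j + μ + 1) • zsum μ j K
      = (K + μ + 1) • zsum μ j (K + 1) + (j : ℝ) • zsum μ (j-1) K := by
  rw [zsum, zsum, zsum_ext μ (j-1) K (j+1) (by omega)]
  rw [Finset.smul_sum, Finset.smul_sum, Finset.smul_sum, ← Finset.sum_add_distrib]
  refine Finset.sum_congr rfl fun i _ => ?_
  rw [smul_smul, smul_smul, smul_smul, ← add_smul]
  exact congrArg (· • _) (key1 μ hμ j i K hK)

lemma three_term_D (μ : ℝ) (hμ : 0 < μ + 1) (k : ℕ) (J : ℝ) :
    (J + k + μ + 1) • (vpoly * zsum μ k J)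
      = ((k:ℝ) + μ + 1) • zsum μ (k+1) J + J • zsum μ k (J - 1) := by
  rw [zsum_ext μ k J (k+2) (by omega), zsum_ext μ k (J-1) (k+2) (by omega),
    zsum_ext μ (k+1) J (k+2) (by omega)]
  rw [vpoly_def, add_mul, one_mul, Finset.mul_sum]
  simp_rw [mul_smul_comm, ← pow_succ']
  rw [smul_add, Finset.smul_sum, Finset.smul_sum, Finset.smul_sum, Finset.smul_sum]
  simp_rw [smul_smul, Polynomial.smul_eq_C_mul]
  set v : Polynomial ℝ := (Polynomial.X - 1) * Polynomial.C (2⁻¹ : ℝ) with hv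
  set α : ℝ := J + (k:ℝ) + μ + 1 with hα
  set β : ℝ := (k:ℝ) + μ + 1 with hβ
  have hmain : ∑ i ∈ Finset.range (k+2), Polynomial.C (α * zc μ k i J) * v ^ (i+1)
      = ∑ i ∈ Finset.range (k+2),
          (Polynomial.C (β * zc μ (k+1) i J) * v ^ i
            + Polynomial.C (J * zc μ k i (J-1)) * v ^ i
            - Polynomial.C (α * zc μ k i J) * v ^ i) := by
    conv_rhs => rw [Finset.sum_range_succ']
    conv_lhs => rw [Finset.sum_range_succ]
    have htop : Polynomial.C (α * zc μ k (k+1) J) * v ^ (k+1+1) = 0 := by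
      rw [zc, Nat.choose_eq_zero_of_lt (by omega)]
      simp
    have hzero : Polynomial.C (β * zc μ (k+1) 0 J) * v ^ 0
        + Polynomial.C (J * zc μ k 0 (J-1)) * v ^ 0
        - Polynomial.C (α * zc μ k 0 J) * v ^ 0 = 0 := by
      rw [zc_zero, zc_zero, zc_zero, pow_zero]
      rw [mul_one, mul_one, mul_one, mul_one, mul_one, mul_one, ← map_add, ← map_sub]
      rw [show β + J - α = 0 by rw [hα, hβ]; ring]
      exact map_zero _
    rw [htop, hzero, add_zero, add_zero]
    refine Finset.sum_congr rfl fun i hi => ?_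
    rw [Finset.mem_range] at hi
    have hk2 := key2 μ hμ k i (by omega) J
    have hC2 : Polynomial.C (α * zc μ k i J)
        = Polynomial.C (β * zc μ (k+1) (i+1) J) + Polynomial.C (J * zc μ k (i+1) (J-1))
          - Polynomial.C (α * zc μ k (i+1) J) := by
      rw [← map_add, ← map_sub]
      exact congrArg Polynomial.C (by rw [hα, hβ]; linarith [hk2])
    linear_combination (v ^ (i+1)) * hC2
  rw [Finset.sum_sub_distrib, Finset.sum_add_distrib] at hmain
  linear_combination hmain

lemma jacobi_norm (μ : ℝ) (hμ : 0 < μ + 1) (r d : ℕ) :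
    ((r.factorial : ℝ) / (ascPochhammer ℝ r).eval (μ + 1)) • jacobiP μ (d : ℝ) r
      = zsum μ r ((r : ℝ) + d) := by
  rw [jacobiP, zsum, smul_smul, Finset.smul_sum]
  refine Finset.sum_congr rfl fun i hi => ?_
  rw [Finset.mem_range, Nat.lt_succ_iff] at hi
  rw [smul_smul]
  congr 1
  have hsplit : (ascPochhammer ℝ r).eval (μ+1)
      = (ascPochhammer ℝ i).eval (μ+1) * (ascPochhammer ℝ (r-i)).eval (μ+1+i) := by
    conv_lhs => rw [show r = i + (r-i) by omega]
    rw [asc_add]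
  have h1 : (0:ℝ) < (ascPochhammer ℝ i).eval (μ+1) := ascPochhammer_pos i _ hμ
  have h2 : (0:ℝ) < (ascPochhammer ℝ (r-i)).eval (μ+1+i) := by
    refine ascPochhammer_pos _ _ ?_
    have : (0:ℝ) ≤ i := Nat.cast_nonneg i
    linarith
  have hf : (0:ℝ) < (r.factorial : ℝ) := by positivity
  rw [zc, hsplit]
  rw [show (i:ℝ) + μ + 1 = μ + 1 + i by ring,
    show (r:ℝ) + μ + (d:ℝ) + 1 = ((r:ℝ) + d) + μ + 1 by ring]
  field_simp

lemma smul_C (s : ℝ) (q : MvPolynomial (Fin 2) ℂ) :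
    s • q = MvPolynomial.C ((s : ℝ) : ℂ) * q := by
  rw [Algebra.smul_def, IsScalarTower.algebraMap_apply ℝ ℂ (MvPolynomial (Fin 2) ℂ),
    MvPolynomial.algebraMap_eq]
  norm_num

lemma zernike_normal (μ : ℝ) (hμ : 0 < μ + 1) (k j : ℕ) :
    zernikeQ μ k j = MvPolynomial.X 0 ^ (k - j) * MvPolynomial.X 1 ^ (j - k) *
      Polynomial.aeval (2 * MvPolynomial.X 0 * MvPolynomial.X 1 - 1)
        (zsum μ (min k j) ((max k j : ℕ) : ℝ)) := by
  rw [zernikeQ]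
  split_ifs with h
  · rw [min_eq_right h, max_eq_left h, Nat.sub_eq_zero_of_le h, pow_zero, mul_one]
    have hB := jacobi_norm μ hμ j (k - j)
    rw [show (j:ℝ) + ((k-j:ℕ):ℝ) = (k:ℝ) by push_cast [Nat.cast_sub h]; ring] at hB
    rw [← hB, map_smul, smul_C]
    ring
  · push_neg at h
    rw [min_eq_left h.le, max_eq_right h.le, Nat.sub_eq_zero_of_le h.le, pow_zero, one_mul]
    have hB := jacobi_norm μ hμ k (j - k)
    rw [show (k:ℝ) + ((j-k:ℕ):ℝ) = (j:ℝ) by push_cast [Nat.cast_sub h.le]; ring] at hB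
    rw [← hB, map_smul, smul_C]
    ring

lemma aeval_vpoly :
    Polynomial.aeval (2 * MvPolynomial.X 0 * MvPolynomial.X 1 - 1 : MvPolynomial (Fin 2) ℂ)
      vpoly = MvPolynomial.X 0 * MvPolynomial.X 1 := by
  rw [vpoly_def]
  simp only [map_add, map_mul, map_sub, map_one, Polynomial.aeval_X, Polynomial.aeval_C]
  have h2 : (algebraMap ℝ (MvPolynomial (Fin 2) ℂ)) 2⁻¹ * 2 = 1 := by
    rw [show (2 : MvPolynomial (Fin 2) ℂ) = algebraMap ℝ (MvPolynomial (Fin 2) ℂ) 2 by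
      simp [map_ofNat], ← map_mul]
    norm_num
  linear_combination (MvPolynomial.X 0 * MvPolynomial.X 1 - 1 : MvPolynomial (Fin 2) ℂ) * h2

lemma main1 (μ : ℝ) (hμ : μ > -1) (k j : ℕ) :
    MvPolynomial.C (((k : ℝ) + (j : ℝ) + μ + 1 : ℝ) : ℂ) *
        (MvPolynomial.X 0 * zernikeQ μ k j) =
      MvPolynomial.C (((k : ℝ) + μ + 1 : ℝ) : ℂ) * zernikeQ μ (k + 1) j +
        MvPolynomial.C (((j : ℝ)) : ℂ) * zernikeQ μ k (j - 1) := by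
  have hμ' : (0:ℝ) < μ + 1 := by linarith
  rcases le_or_gt j k with h | h
  · rcases Nat.eq_zero_or_pos j with hj | hj
    · subst hj
      rw [show (0:ℕ) - 1 = 0 from rfl]
      rw [zernike_normal μ hμ' k 0, zernike_normal μ hμ' (k+1) 0]
      rw [show min k 0 = 0 by omega, show max k 0 = k by omega,
        show min (k+1) 0 = 0 by omega, show max (k+1) 0 = k+1 by omega]
      simp only [Nat.sub_zero, Nat.zero_sub, zsum_zero, map_one, pow_zero, mul_one, Nat.cast_zero]
      rw [show ((k:ℝ) + 0 + μ + 1 : ℝ) = ((k:ℝ) + μ + 1 : ℝ) by ring,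
        show (((0:ℝ)) : ℂ) = 0 by norm_num, map_zero, zero_mul, add_zero]
      ring
    · have hC := three_term_C μ hμ' j (k:ℝ) (Nat.cast_nonneg k)
      rw [show (k:ℝ) + 1 = ((k+1:ℕ):ℝ) by push_cast; ring] at hC
      have h' := congrArg
        (Polynomial.aeval (2 * MvPolynomial.X 0 * MvPolynomial.X 1 - 1 : MvPolynomial (Fin 2) ℂ))
        hC
      simp only [map_add, map_smul] at h'
      rw [smul_C, smul_C, smul_C] at h'
      rw [zernike_normal μ hμ' k j, zernike_normal μ hμ' (k+1) j, zernike_normal μ hμ' k (j-1)]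
      rw [min_eq_right h, max_eq_left h, min_eq_right (by omega : j ≤ k+1),
        max_eq_left (by omega : j ≤ k+1), min_eq_right (by omega : j-1 ≤ k),
        max_eq_left (by omega : j-1 ≤ k)]
      rw [show k+1-j = (k-j)+1 by omega, show k-(j-1) = (k-j)+1 by omega,
        show j-(k+1) = 0 by omega, show j-1-k = 0 by omega, show j-k = 0 by omega]
      linear_combination (MvPolynomial.X 0 ^ (k-j+1) : MvPolynomial (Fin 2) ℂ) * h'
  · have hD := three_term_D μ hμ' k (j:ℝ)
    rw [show (j:ℝ) - 1 = ((j-1:ℕ):ℝ) by push_cast [Nat.cast_sub (by omega : 1 ≤ j)]; ring,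
      show (j:ℝ) + (k:ℝ) + μ + 1 = (k:ℝ) + (j:ℝ) + μ + 1 by ring] at hD
    have h' := congrArg
      (Polynomial.aeval (2 * MvPolynomial.X 0 * MvPolynomial.X 1 - 1 : MvPolynomial (Fin 2) ℂ))
      hD
    simp only [map_add, map_smul, map_mul, aeval_vpoly] at h'
    rw [smul_C, smul_C, smul_C] at h'
    rw [zernike_normal μ hμ' k j, zernike_normal μ hμ' (k+1) j, zernike_normal μ hμ' k (j-1)]
    rw [min_eq_left h.le, max_eq_right h.le, min_eq_left (by omega : k+1 ≤ j),
      max_eq_right (by omega : k+1 ≤ j), min_eq_left (by omega : k ≤ j-1),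
      max_eq_right (by omega : k ≤ j-1)]
    rw [show k-j = 0 by omega, show j-k = (j-k-1)+1 by omega, show k+1-j = 0 by omega,
      show j-(k+1) = j-k-1 by omega, show k-(j-1) = 0 by omega, show j-1-k = j-k-1 by omega]
    linear_combination (MvPolynomial.X 1 ^ (j-k-1) : MvPolynomial (Fin 2) ℂ) * h'

noncomputable def sw : Fin 2 → Fin 2 := ![1, 0]

lemma rename_zernike (μ : ℝ) (hμ : 0 < μ + 1) (k j : ℕ) :
    MvPolynomial.rename sw (zernikeQ μ k j) = zernikeQ μ j k := by
  have hre : ∀ p : Polynomial ℝ,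
      MvPolynomial.rename sw
          (Polynomial.aeval (2 * MvPolynomial.X 0 * MvPolynomial.X 1 - 1 :
            MvPolynomial (Fin 2) ℂ) p)
        = Polynomial.aeval
            (MvPolynomial.rename sw
              (2 * MvPolynomial.X 0 * MvPolynomial.X 1 - 1 : MvPolynomial (Fin 2) ℂ)) p := by
    intro p
    have := Polynomial.aeval_algHom_apply
      ((MvPolynomial.rename sw : MvPolynomial (Fin 2) ℂ →ₐ[ℂ] MvPolynomial (Fin 2) ℂ).restrictScalars ℝ)
      (2 * MvPolynomial.X 0 * MvPolynomial.X 1 - 1) p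
    simpa using this.symm
  rw [zernike_normal μ hμ k j, zernike_normal μ hμ j k]
  rw [map_mul, map_mul, map_pow, map_pow, MvPolynomial.rename_X, MvPolynomial.rename_X, hre]
  have hq : (MvPolynomial.rename sw (R := ℂ))
      (2 * MvPolynomial.X 0 * MvPolynomial.X 1 - 1) =
      2 * MvPolynomial.X 0 * MvPolynomial.X 1 - 1 := by
    simp only [map_sub, map_mul, MvPolynomial.rename_X, map_ofNat, map_one]
    rw [show sw 0 = 1 from rfl, show sw 1 = 0 from rfl]
    ring
  rw [hq, show sw 0 = 1 from rfl, show sw 1 = 0 from rfl, min_comm k j, max_comm k j]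
  ring

end ZernikeAux

open MvPolynomial in
theorem zernike_three_term (μ : ℝ) (hμ : μ > -1) (k j : ℕ) :
    (C ((((k : ℝ) + (j : ℝ) + μ + 1 : ℝ)) : ℂ) * (X 0 * zernikeQ μ k j) =
      C ((((k : ℝ) + μ + 1 : ℝ)) : ℂ) * zernikeQ μ (k + 1) j +
        C (((j : ℝ)) : ℂ) * zernikeQ μ k (j - 1)) ∧
    (C ((((k : ℝ) + (j : ℝ) + μ + 1 : ℝ)) : ℂ) * (X 1 * zernikeQ μ k j) =
      C ((((j : ℝ) + μ + 1 : ℝ)) : ℂ) * zernikeQ μ k (j + 1) +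
        C (((k : ℝ)) : ℂ) * zernikeQ μ (k - 1) j) := by
  have hμ' : (0:ℝ) < μ + 1 := by linarith
  refine ⟨ZernikeAux.main1 μ hμ k j, ?_⟩
  have h1 := ZernikeAux.main1 μ hμ j k
  have h2 := congrArg (MvPolynomial.rename ZernikeAux.sw) h1
  simp only [map_add, map_mul, MvPolynomial.rename_C, MvPolynomial.rename_X,
    ZernikeAux.rename_zernike μ hμ'] at h2
  rw [show ZernikeAux.sw 0 = 1 from rfl] at h2
  rw [show ((j:ℝ) + (k:ℝ) + μ + 1 : ℝ) = ((k:ℝ) + (j:ℝ) + μ + 1 : ℝ) by ring] at h2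
  exact h2
end

section
/- Let μ > −1 and k, j ≥ 0 be integers. The complex generalized Zernike polynomials satisfy the structure relations: (k+j+μ+1)(1−zw) ∂/∂z Q^μ_{k,j}(z,w) = k(j+μ+1)(Q^μ_{k−1,j}(z,w) − Q^μ_{k,j+1}(z,w)) when k ≥ 1, with both sides vanishing when k = 0; and (k+j+μ+1)(1−zw) ∂/∂z̄ Q^μ_{k,j}(z,w) = j(k+μ+1)(Q^μ_{k,j−1}(z,w) − Q^μ_{k+1,j}(z,w)) when j ≥ 1, with both sides vanishing when j = 0. These are identities of bivariate polynomials in (z,w). -/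
set_option maxHeartbeats 1000000
noncomputable def pk (x : ℝ) (n : ℕ) : ℝ := (ascPochhammer ℝ n).eval x
lemma pk_zero (x : ℝ) : pk x 0 = 1 := by simp [pk]
lemma pk_succ_right (x : ℝ) (n : ℕ) : pk x (n+1) = pk x n * (x + n) := by
  simp [pk, ascPochhammer_succ_eval]
lemma pk_succ_left (x : ℝ) (n : ℕ) : pk x (n+1) = x * pk (x+1) n := by
  simp [pk, ascPochhammer_succ_left, Polynomial.eval_comp]
lemma pk_pos {x : ℝ} (hx : 0 < x) (n : ℕ) : 0 < pk x n := by
  induction n with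
  | zero => simp [pk_zero]
  | succ n ih => rw [pk_succ_right]; positivity
lemma pk_congr {x y : ℝ} (h : x = y) (n : ℕ) : pk x n = pk y n := by rw [h]
noncomputable def Acoef (μ : ℝ) (j m s : ℕ) : ℝ :=
  (j.choose s : ℝ) * pk ((s : ℝ) + μ + 1) (j - s) * pk ((j : ℝ) + m + μ + 1) s / pk (μ + 1) j
lemma Acoef_of_gt {μ : ℝ} {j s : ℕ} (h : j < s) (m : ℕ) : Acoef μ j m s = 0 := by
  simp [Acoef, Nat.choose_eq_zero_of_lt h]

lemma Acoef_zero {μ : ℝ} (hμ : μ > -1) (j m : ℕ) : Acoef μ j m 0 = 1 := by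
  have h : pk (μ+1) j ≠ 0 := (pk_pos (by linarith) j).ne'
  simp only [Acoef, Nat.choose_zero_right, Nat.cast_one, pk_zero, Nat.sub_zero]
  rw [show (0:ℕ) = (0:ℕ) from rfl]
  push_cast
  rw [show (0:ℝ) + μ + 1 = μ + 1 by ring]
  field_simp

lemma keyI_main (μ : ℝ) (hμ : μ > -1) (t d m : ℕ) (hm : 1 ≤ m) :
    -((2*((t+1+d:ℕ):ℝ)+m+μ+1)) * (((m:ℝ)+t) * Acoef μ (t+1+d) m t + ((t:ℝ)+1) * Acoef μ (t+1+d) m (t+1)) =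
      (((t+1+d:ℕ):ℝ)+m)*(((t+1+d:ℕ):ℝ)+μ+1) *
        (Acoef μ (t+1+d) (m-1) (t+1) - Acoef μ (t+1+d+1) (m-1) (t+1)) := by
  have hct : (0:ℝ) ≤ (t:ℝ) := Nat.cast_nonneg t
  have hcm : (1:ℝ) ≤ (m:ℝ) := by exact_mod_cast hm
  have hcd : (0:ℝ) ≤ (d:ℝ) := Nat.cast_nonneg d
  have hD : pk (μ+1) (t+1+d) ≠ 0 := (pk_pos (by linarith) _).ne'
  have hq1 : pk ((t:ℝ)+μ+2) d ≠ 0 := (pk_pos (by linarith) d).ne'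
  have hq2 : pk ((t:ℝ)+1+(d:ℝ)+(m:ℝ)+μ+1) t ≠ 0 := (pk_pos (by linarith) t).ne'
  have hmj : μ + 1 + ((t:ℝ)+1+(d:ℝ)) ≠ 0 := by
    intro h; nlinarith
  have ht1 : ((t:ℝ)+1) ≠ 0 := by positivity
  have e1 : t+1+d - t = d + 1 := by omega
  have e2 : t+1+d - (t+1) = d := by omega
  have e3 : t+1+d+1 - (t+1) = d+1 := by omega
  have ecast : ((m-1:ℕ):ℝ) = (m:ℝ) - 1 := by rw [Nat.cast_sub hm]; norm_num
  have hch : ((t+1+d).choose (t+1) : ℝ) * ((t:ℝ)+1) = ((t+1+d).choose t : ℝ) * ((d:ℝ)+1) := by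
    have h0 := Nat.choose_succ_right_eq (t+1+d) t
    rw [e1] at h0
    exact_mod_cast congrArg (Nat.cast : ℕ → ℝ) h0
  have hch2 : (((t+1+d+1)).choose (t+1) : ℝ) = ((t+1+d).choose t : ℝ) + ((t+1+d).choose (t+1) : ℝ) := by
    rw [Nat.choose_succ_succ]; push_cast; ring
  simp only [Acoef, e1, e2, e3, hch2, ecast]
  push_cast
  rw [pk_succ_left ((t:ℝ)+μ+1) d,
      pk_succ_right ((t:ℝ)+1+(d:ℝ)+(m:ℝ)+μ+1) t,
      pk_succ_right (μ+1) (t+1+d)]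
  simp only [pk_congr (show (t:ℝ)+μ+1+1 = (t:ℝ)+μ+2 by ring),
      pk_congr (show (t:ℝ)+1+μ+1 = (t:ℝ)+μ+2 by ring),
      pk_congr (show (t:ℝ)+1+(d:ℝ)+((m:ℝ)-1)+μ+1 = (t:ℝ)+(d:ℝ)+(m:ℝ)+μ+1 by ring),
      pk_congr (show (t:ℝ)+1+(d:ℝ)+1+((m:ℝ)-1)+μ+1 = (t:ℝ)+1+(d:ℝ)+(m:ℝ)+μ+1 by ring)]
  rw [pk_succ_left ((t:ℝ)+(d:ℝ)+(m:ℝ)+μ+1) t,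
      pk_succ_right ((t:ℝ)+μ+2) d,
      pk_succ_right ((t:ℝ)+1+(d:ℝ)+(m:ℝ)+μ+1) t]
  simp only [pk_congr (show (t:ℝ)+(d:ℝ)+(m:ℝ)+μ+1+1 = (t:ℝ)+1+(d:ℝ)+(m:ℝ)+μ+1 by ring)]
  push_cast
  have hc1 : ((t+1+d).choose (t+1) : ℝ) = ((t+1+d).choose t : ℝ) * ((d:ℝ)+1) / ((t:ℝ)+1) := by
    field_simp; linarith [hch]
  rw [hc1]
  field_simp
  ring

lemma keyII_main (μ : ℝ) (hμ : μ > -1) (t d n : ℕ) :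
    -((2*((t+1+d+1:ℕ):ℝ)+n+μ+1)) * (((t:ℝ)+1) * Acoef μ (t+1+d+1) n (t+1)) =
      (((t+1+d+1:ℕ):ℝ)) * (((t+1+d+1:ℕ):ℝ)+n+μ+1) *
        (Acoef μ (t+1+d) (n+1) (t+1) - Acoef μ (t+1+d+1) (n+1) (t+1)) := by
  have hct : (0:ℝ) ≤ (t:ℝ) := Nat.cast_nonneg t
  have hcn : (0:ℝ) ≤ (n:ℝ) := Nat.cast_nonneg n
  have hcd : (0:ℝ) ≤ (d:ℝ) := Nat.cast_nonneg d
  have hD : pk (μ+1) (t+1+d) ≠ 0 := (pk_pos (by linarith) _).ne'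
  have hmj : μ + 1 + ((t:ℝ)+1+(d:ℝ)) ≠ 0 := by intro h; nlinarith
  have ht1 : ((t:ℝ)+1) ≠ 0 := by positivity
  have e1 : t+1+d+1 - (t+1) = d + 1 := by omega
  have e2 : t+1+d - (t+1) = d := by omega
  have hch : ((t+1+d).choose (t+1) : ℝ) * ((t:ℝ)+1) = ((t+1+d).choose t : ℝ) * ((d:ℝ)+1) := by
    have h0 := Nat.choose_succ_right_eq (t+1+d) t
    rw [show t+1+d-t = d+1 by omega] at h0
    exact_mod_cast congrArg (Nat.cast : ℕ → ℝ) h0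
  have hch2 : (((t+1+d+1)).choose (t+1) : ℝ) = ((t+1+d).choose t : ℝ) + ((t+1+d).choose (t+1) : ℝ) := by
    rw [Nat.choose_succ_succ]; push_cast; ring
  simp only [Acoef, e1, e2, hch2]
  push_cast
  rw [pk_succ_right (μ+1) (t+1+d)]
  simp only [pk_congr (show (t:ℝ)+1+μ+1 = (t:ℝ)+μ+2 by ring),
      pk_congr (show (t:ℝ)+1+(d:ℝ)+1+(n:ℝ)+μ+1 = (t:ℝ)+(d:ℝ)+(n:ℝ)+μ+3 by ring),
      pk_congr (show (t:ℝ)+1+(d:ℝ)+((n:ℝ)+1)+μ+1 = (t:ℝ)+(d:ℝ)+(n:ℝ)+μ+3 by ring),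
      pk_congr (show (t:ℝ)+1+(d:ℝ)+1+((n:ℝ)+1)+μ+1 = (t:ℝ)+(d:ℝ)+(n:ℝ)+μ+4 by ring)]
  rw [pk_succ_right ((t:ℝ)+μ+2) d,
      pk_succ_left ((t:ℝ)+(d:ℝ)+(n:ℝ)+μ+3) t,
      pk_succ_right ((t:ℝ)+(d:ℝ)+(n:ℝ)+μ+4) t]
  simp only [pk_congr (show (t:ℝ)+(d:ℝ)+(n:ℝ)+μ+3+1 = (t:ℝ)+(d:ℝ)+(n:ℝ)+μ+4 by ring)]
  push_cast
  have hc1 : ((t+1+d).choose (t+1) : ℝ) = ((t+1+d).choose t : ℝ) * ((d:ℝ)+1) / ((t:ℝ)+1) := by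
    field_simp; linarith [hch]
  rw [hc1]
  field_simp
  ring

lemma keyI_edge (μ : ℝ) (hμ : μ > -1) (j m : ℕ) (hm : 1 ≤ m) :
    -((2*(j:ℝ)+m+μ+1)) * (((m:ℝ)+j) * Acoef μ j m j + ((j:ℝ)+1) * Acoef μ j m (j+1)) =
      ((j:ℝ)+m)*((j:ℝ)+μ+1) * (Acoef μ j (m-1) (j+1) - Acoef μ (j+1) (m-1) (j+1)) := by
  have h1 : pk (μ+1) j ≠ 0 := (pk_pos (by linarith) j).ne'
  rw [Acoef_of_gt (Nat.lt_succ_self j), Acoef_of_gt (Nat.lt_succ_self j)]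
  simp only [Acoef, Nat.sub_self, Nat.choose_self, pk_zero, Nat.cast_one]
  have hc : ((m - 1 : ℕ) : ℝ) = (m : ℝ) - 1 := by rw [Nat.cast_sub hm]; norm_num
  rw [hc]
  push_cast
  rw [show (j:ℝ) + 1 + ((m:ℝ) - 1) + μ + 1 = (j:ℝ) + m + μ + 1 by ring]
  have h2 : μ + 1 + (j:ℝ) ≠ 0 := by
    have : (0:ℝ) ≤ j := Nat.cast_nonneg j; intro h; nlinarith
  rw [pk_succ_right (↑j + ↑m + μ + 1) j, pk_succ_right (μ+1) j]
  field_simp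
  ring

lemma keyII_edge (μ : ℝ) (hμ : μ > -1) (t n : ℕ) :
    -((2*((t+1:ℕ):ℝ)+n+μ+1)) * (((t:ℝ)+1) * Acoef μ (t+1) n (t+1)) =
      (((t+1:ℕ):ℝ)) * (((t+1:ℕ):ℝ)+n+μ+1) * (Acoef μ t (n+1) (t+1) - Acoef μ (t+1) (n+1) (t+1)) := by
  have hct : (0:ℝ) ≤ (t:ℝ) := Nat.cast_nonneg t
  have hcn : (0:ℝ) ≤ (n:ℝ) := Nat.cast_nonneg n
  have hD : pk (μ+1) (t+1) ≠ 0 := (pk_pos (by linarith) _).ne'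
  rw [Acoef_of_gt (Nat.lt_succ_self t)]
  simp only [Acoef, Nat.sub_self, Nat.choose_self, pk_zero, Nat.cast_one]
  push_cast
  simp only [pk_congr (show (t:ℝ)+1+(n:ℝ)+μ+1 = (t:ℝ)+(n:ℝ)+μ+2 by ring),
      pk_congr (show (t:ℝ)+1+((n:ℝ)+1)+μ+1 = (t:ℝ)+(n:ℝ)+μ+3 by ring)]
  rw [pk_succ_left ((t:ℝ)+(n:ℝ)+μ+2) t, pk_succ_right ((t:ℝ)+(n:ℝ)+μ+3) t]
  simp only [pk_congr (show (t:ℝ)+(n:ℝ)+μ+2+1 = (t:ℝ)+(n:ℝ)+μ+3 by ring)]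
  field_simp
  ring

lemma keyI (μ : ℝ) (hμ : μ > -1) (j m t : ℕ) (hm : 1 ≤ m) :
    -((2*(j:ℝ)+m+μ+1)) * (((m:ℝ)+t) * Acoef μ j m t + ((t:ℝ)+1) * Acoef μ j m (t+1)) =
      ((j:ℝ)+m)*((j:ℝ)+μ+1) * (Acoef μ j (m-1) (t+1) - Acoef μ (j+1) (m-1) (t+1)) := by
  rcases lt_trichotomy t j with h | rfl | h
  · obtain ⟨d, rfl⟩ : ∃ d, j = t+1+d := ⟨j - t - 1, by omega⟩
    exact keyI_main μ hμ t d m hm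
  · exact keyI_edge μ hμ t m hm
  · rw [Acoef_of_gt h, Acoef_of_gt (by omega), Acoef_of_gt (by omega), Acoef_of_gt (by omega)]
    ring

lemma keyII (μ : ℝ) (hμ : μ > -1) (k n t : ℕ) (hk : 1 ≤ k) :
    -((2*(k:ℝ)+n+μ+1)) * (((t:ℝ)+1) * Acoef μ k n (t+1)) =
      (k:ℝ) * ((k:ℝ)+n+μ+1) * (Acoef μ (k-1) (n+1) (t+1) - Acoef μ k (n+1) (t+1)) := by
  rcases lt_trichotomy (t+1) k with h | h | h
  · obtain ⟨d, rfl⟩ : ∃ d, k = t+1+d+1 := ⟨k - t - 2, by omega⟩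
    have : t+1+d+1-1 = t+1+d := by omega
    rw [this]
    exact keyII_main μ hμ t d n
  · subst h
    have : t+1-1 = t := by omega
    rw [this]
    exact keyII_edge μ hμ t n
  · rw [Acoef_of_gt (by omega), Acoef_of_gt (by omega), Acoef_of_gt (by omega)]
    ring

open Polynomial in
noncomputable def Gpoly (μ : ℝ) (j m : ℕ) : Polynomial ℝ :=
  ∑ s ∈ Finset.range (j+2), Polynomial.C (Acoef μ j m s) * Polynomial.X ^ s

open Polynomial in
lemma coeff_Gpoly (μ : ℝ) (j m t : ℕ) : (Gpoly μ j m).coeff t = Acoef μ j m t := by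
  rw [Gpoly, Polynomial.finset_sum_coeff]
  simp only [Polynomial.coeff_C_mul, Polynomial.coeff_X_pow]
  rcases lt_or_ge t (j+2) with h | h
  · rw [Finset.sum_eq_single t]
    · simp
    · intro b _ hb; simp [Ne.symm hb]
    · intro hc; exact absurd (Finset.mem_range.mpr h) hc
  · rw [Finset.sum_eq_zero, Acoef_of_gt (by omega)]
    intro b hb
    simp only [Finset.mem_range] at hb
    rw [if_neg (by omega), mul_zero]

open Polynomial in
lemma polyI (μ : ℝ) (hμ : μ > -1) (j m : ℕ) (hm : 1 ≤ m) :
    C (2*(j:ℝ)+m+μ+1) * (-X * (C (m:ℝ) * Gpoly μ j m + (X+1) * derivative (Gpoly μ j m))) =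
      C (((j:ℝ)+m)*((j:ℝ)+μ+1)) * (Gpoly μ j (m-1) - Gpoly μ (j+1) (m-1)) := by
  have hXD : ∀ t : ℕ, (X * derivative (Gpoly μ j m)).coeff t = (t:ℝ) * Acoef μ j m t := by
    intro t
    rcases t with _ | t
    · simp
    · rw [Polynomial.coeff_X_mul, Polynomial.coeff_derivative, coeff_Gpoly]
      push_cast; ring
  ext t
  rcases t with _ | t
  · simp [coeff_Gpoly, Acoef_zero hμ]
  · rw [Polynomial.coeff_C_mul, Polynomial.coeff_C_mul, neg_mul, Polynomial.coeff_neg,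
        Polynomial.coeff_X_mul]
    rw [show (X+1) * derivative (Gpoly μ j m) =
          X * derivative (Gpoly μ j m) + derivative (Gpoly μ j m) by ring]
    rw [Polynomial.coeff_add, Polynomial.coeff_C_mul, coeff_Gpoly, Polynomial.coeff_add,
        hXD, Polynomial.coeff_derivative, coeff_Gpoly, Polynomial.coeff_sub,
        coeff_Gpoly, coeff_Gpoly]
    have := keyI μ hμ j m t hm
    push_cast at this ⊢
    nlinarith [this]

open Polynomial in
lemma polyII (μ : ℝ) (hμ : μ > -1) (k n : ℕ) (hk : 1 ≤ k) :
    C (2*(k:ℝ)+n+μ+1) * (-X * derivative (Gpoly μ k n)) =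
      C ((k:ℝ)*((k:ℝ)+n+μ+1)) * (Gpoly μ (k-1) (n+1) - Gpoly μ k (n+1)) := by
  ext t
  rcases t with _ | t
  · simp [coeff_Gpoly, Acoef_zero hμ]
  · rw [Polynomial.coeff_C_mul, Polynomial.coeff_C_mul, neg_mul, Polynomial.coeff_neg,
        Polynomial.coeff_X_mul, Polynomial.coeff_derivative, coeff_Gpoly, Polynomial.coeff_sub,
        coeff_Gpoly, coeff_Gpoly]
    have := keyII μ hμ k n t hk
    push_cast at this ⊢
    nlinarith [this]

open MvPolynomial in
noncomputable def uu : MvPolynomial (Fin 2) ℂ := X 0 * X 1 - 1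

open MvPolynomial in
lemma aeval_Gpoly (μ : ℝ) (j m : ℕ) :
    Polynomial.aeval uu (Gpoly μ j m) =
      ∑ s ∈ Finset.range (j+2), C ((Acoef μ j m s : ℝ) : ℂ) * uu ^ s := by
  rw [Gpoly, map_sum]
  refine Finset.sum_congr rfl fun s _ => ?_
  rw [map_mul, map_pow, Polynomial.aeval_X, Polynomial.aeval_C]
  rfl

open MvPolynomial in
lemma aeval_W_pow (s : ℕ) :
    (Polynomial.aeval (2 * X 0 * X 1 - 1 : MvPolynomial (Fin 2) ℂ))
      (((Polynomial.X - 1) * Polynomial.C (2⁻¹:ℝ))^s) = uu^s := by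
  rw [map_pow]
  congr 1
  rw [map_mul, map_sub, Polynomial.aeval_X, map_one, Polynomial.aeval_C]
  have h0 : algebraMap ℝ (MvPolynomial (Fin 2) ℂ) 2⁻¹ = C ((2⁻¹:ℝ):ℂ) := rfl
  rw [h0, show ((2⁻¹:ℝ):ℂ) = (2⁻¹:ℂ) by norm_num, uu]
  have h4 : (2 : MvPolynomial (Fin 2) ℂ) * C (2⁻¹:ℂ) = 1 := by
    rw [show (2 : MvPolynomial (Fin 2) ℂ) = C 2 from (map_ofNat C 2).symm, ← map_mul]
    norm_num
  linear_combination (X 0 * X 1 - 1 : MvPolynomial (Fin 2) ℂ) * h4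

open MvPolynomial in
lemma rep1 (μ : ℝ) (hμ : μ > -1) {k j : ℕ} (h : j ≤ k) :
    zernikeQ μ k j = X 0 ^ (k-j) * Polynomial.aeval uu (Gpoly μ j (k-j)) := by
  have hfac : (j.factorial : ℝ) ≠ 0 := Nat.cast_ne_zero.mpr j.factorial_ne_zero
  have hpk : pk (μ+1) j ≠ 0 := (pk_pos (by linarith) j).ne'
  rw [zernikeQ, if_pos h, jacobiP, aeval_Gpoly]
  conv_rhs => rw [Finset.sum_range_succ, Acoef_of_gt (Nat.lt_succ_self j)]
  rw [Complex.ofReal_zero, map_zero, zero_mul, add_zero]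
  simp only [map_smul, map_sum, aeval_W_pow]
  simp only [Algebra.smul_def, MvPolynomial.algebraMap_apply, Complex.coe_algebraMap]
  simp only [Finset.mul_sum]
  refine Finset.sum_congr rfl fun s hs => ?_
  have hco : ((((j.factorial : ℝ) / ((ascPochhammer ℝ j).eval (μ + 1)) : ℝ)) : ℂ) *
      ((((j.factorial:ℝ)⁻¹ : ℝ)) : ℂ) *
      ((((j.choose s : ℝ) * ((ascPochhammer ℝ (j - s)).eval ((s : ℝ) + μ + 1)) *
          ((ascPochhammer ℝ s).eval ((j : ℝ) + μ + ((k-j:ℕ):ℝ) + 1)) : ℝ)) : ℂ) =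
      ((Acoef μ j (k-j) s : ℝ) : ℂ) := by
    rw [← Complex.ofReal_mul, ← Complex.ofReal_mul, Complex.ofReal_inj]
    show (j.factorial : ℝ) / pk (μ+1) j * (j.factorial:ℝ)⁻¹ *
      ((j.choose s : ℝ) * pk ((s:ℝ)+μ+1) (j-s) * pk ((j:ℝ)+μ+((k-j:ℕ):ℝ)+1) s) = _
    rw [Acoef, pk_congr (show (j:ℝ)+μ+((k-j:ℕ):ℝ)+1 = (j:ℝ)+((k-j:ℕ):ℝ)+μ+1 by ring)]
    field_simp
  have hcoC := congrArg (MvPolynomial.C (σ := Fin 2)) hco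
  simp only [map_mul] at hcoC
  linear_combination (X 0 ^ (k-j) * uu ^ s : MvPolynomial (Fin 2) ℂ) * hcoC


open MvPolynomial in
lemma rep2 (μ : ℝ) (hμ : μ > -1) {k j : ℕ} (h : k ≤ j) :
    zernikeQ μ k j = X 1 ^ (j-k) * Polynomial.aeval uu (Gpoly μ k (j-k)) := by
  rcases eq_or_lt_of_le h with rfl | hlt
  · rw [rep1 μ hμ (le_refl k), Nat.sub_self]; simp
  · have hfac : (k.factorial : ℝ) ≠ 0 := Nat.cast_ne_zero.mpr k.factorial_ne_zero
    have hpk : pk (μ+1) k ≠ 0 := (pk_pos (by linarith) k).ne'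
    rw [zernikeQ, if_neg (by omega), jacobiP, aeval_Gpoly]
    conv_rhs => rw [Finset.sum_range_succ, Acoef_of_gt (Nat.lt_succ_self k)]
    rw [Complex.ofReal_zero, map_zero, zero_mul, add_zero]
    simp only [map_smul, map_sum, aeval_W_pow]
    simp only [Algebra.smul_def, MvPolynomial.algebraMap_apply, Complex.coe_algebraMap]
    simp only [Finset.mul_sum]
    refine Finset.sum_congr rfl fun s hs => ?_
    have hco : ((((k.factorial : ℝ) / ((ascPochhammer ℝ k).eval (μ + 1)) : ℝ)) : ℂ) *
        ((((k.factorial:ℝ)⁻¹ : ℝ)) : ℂ) *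
        ((((k.choose s : ℝ) * ((ascPochhammer ℝ (k - s)).eval ((s : ℝ) + μ + 1)) *
            ((ascPochhammer ℝ s).eval ((k : ℝ) + μ + ((j-k:ℕ):ℝ) + 1)) : ℝ)) : ℂ) =
        ((Acoef μ k (j-k) s : ℝ) : ℂ) := by
      rw [← Complex.ofReal_mul, ← Complex.ofReal_mul, Complex.ofReal_inj]
      show (k.factorial : ℝ) / pk (μ+1) k * (k.factorial:ℝ)⁻¹ *
        ((k.choose s : ℝ) * pk ((s:ℝ)+μ+1) (k-s) * pk ((k:ℝ)+μ+((j-k:ℕ):ℝ)+1) s) = _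
      rw [Acoef, pk_congr (show (k:ℝ)+μ+((j-k:ℕ):ℝ)+1 = (k:ℝ)+((j-k:ℕ):ℝ)+μ+1 by ring)]
      field_simp
    have hcoC := congrArg (MvPolynomial.C (σ := Fin 2)) hco
    simp only [map_mul] at hcoC
    linear_combination (X 1 ^ (j-k) * uu ^ s : MvPolynomial (Fin 2) ℂ) * hcoC

open MvPolynomial in
lemma pderiv_uu_0 : pderiv (0 : Fin 2) uu = X 1 := by
  rw [uu]
  rw [map_sub, pderiv_mul, pderiv_X_self, pderiv_X_of_ne (by decide), pderiv_one]
  ring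

open MvPolynomial in
lemma pderiv_aeval_uu (i : Fin 2) (p : Polynomial ℝ) :
    pderiv i (Polynomial.aeval uu p) =
      Polynomial.aeval uu (Polynomial.derivative p) * pderiv i uu := by
  induction p using Polynomial.induction_on with
  | C a =>
      simp only [Polynomial.aeval_C, Polynomial.derivative_C, map_zero, zero_mul]
      show pderiv i (algebraMap ℝ (MvPolynomial (Fin 2) ℂ) a) = 0
      rw [MvPolynomial.algebraMap_apply, pderiv_C]
  | add p q hp hq => simp only [map_add, hp, hq]; ring
  | monomial n a ih =>
      simp only [map_mul, map_pow, Polynomial.aeval_X, Polynomial.aeval_C,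
        MvPolynomial.algebraMap_apply, Polynomial.derivative_C_mul, Polynomial.derivative_X_pow,
        pderiv_C_mul, pderiv_pow, Nat.add_sub_cancel, map_natCast]
      push_cast
      ring

open MvPolynomial in
lemma mainZ (μ : ℝ) (hμ : μ > -1) (k j : ℕ) (hk : 1 ≤ k) :
    C ((((k : ℝ) + (j : ℝ) + μ + 1 : ℝ)) : ℂ) *
        ((1 - X 0 * X 1) * pderiv (0 : Fin 2) (zernikeQ μ k j)) =
      C ((((k : ℝ) * ((j : ℝ) + μ + 1) : ℝ)) : ℂ) *
        (zernikeQ μ (k - 1) j - zernikeQ μ k (j + 1)) := by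
  rcases lt_or_ge j k with hjk | hjk
  · obtain ⟨m', rfl⟩ : ∃ m', k = j + m' + 1 := ⟨k - j - 1, by omega⟩
    rw [rep1 μ hμ (show j ≤ j+m'+1 by omega), rep1 μ hμ (show j ≤ j+m'+1-1 by omega),
        rep1 μ hμ (show j+1 ≤ j+m'+1 by omega),
        show j+m'+1-j = m'+1 by omega, show j+m'+1-1-j = m' by omega,
        show j+m'+1-(j+1) = m' by omega]
    rw [pderiv_mul, pderiv_pow, pderiv_X_self, pderiv_aeval_uu, pderiv_uu_0,
        Nat.add_sub_cancel]
    have key := congrArg (fun g => (X 0 ^ m' : MvPolynomial (Fin 2) ℂ) * Polynomial.aeval uu g)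
        (polyI μ hμ j (m'+1) (by omega))
    simp only [Nat.add_sub_cancel] at key
    simp only [map_mul, map_add, map_sub, map_neg, Polynomial.aeval_X, Polynomial.aeval_C,
      map_one, MvPolynomial.algebraMap_apply, Complex.coe_algebraMap] at key
    simp only [uu] at key ⊢
    push_cast at key ⊢
    simp only [map_add, map_mul, map_one, map_natCast, Complex.ofReal_add, Complex.ofReal_mul,
      Complex.ofReal_natCast, Complex.ofReal_one, Complex.ofReal_ofNat, map_ofNat] at key ⊢
    linear_combination key
  · obtain ⟨n, rfl⟩ : ∃ n, j = k + n := ⟨j - k, by omega⟩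
    rw [rep2 μ hμ (show k ≤ k+n by omega), rep2 μ hμ (show k-1 ≤ k+n by omega),
        rep2 μ hμ (show k ≤ k+n+1 by omega),
        show k+n-k = n by omega, show k+n-(k-1) = n+1 by omega, show k+n+1-k = n+1 by omega]
    rw [pderiv_mul, pderiv_pow, pderiv_X_of_ne (by decide), pderiv_aeval_uu, pderiv_uu_0]
    have key := congrArg (fun g => (X 1 ^ (n+1) : MvPolynomial (Fin 2) ℂ) * Polynomial.aeval uu g)
        (polyII μ hμ k n hk)
    simp only [map_mul, map_add, map_sub, map_neg, Polynomial.aeval_X, Polynomial.aeval_C,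
      map_one, MvPolynomial.algebraMap_apply, Complex.coe_algebraMap] at key
    simp only [uu] at key ⊢
    push_cast at key ⊢
    simp only [map_add, map_mul, map_one, map_natCast, Complex.ofReal_add, Complex.ofReal_mul,
      Complex.ofReal_natCast, Complex.ofReal_one, Complex.ofReal_ofNat, map_ofNat] at key ⊢
    linear_combination key

open MvPolynomial in
lemma derivG0 (μ : ℝ) (m : ℕ) : Polynomial.derivative (Gpoly μ 0 m) = 0 := by
  ext t
  rw [Polynomial.coeff_derivative, coeff_Gpoly, Acoef_of_gt (Nat.succ_pos t)]
  simp

open MvPolynomial in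
lemma mainZ0 (μ : ℝ) (hμ : μ > -1) (j : ℕ) :
    C ((((0 : ℝ) + (j : ℝ) + μ + 1 : ℝ)) : ℂ) *
        ((1 - X 0 * X 1) * pderiv (0 : Fin 2) (zernikeQ μ 0 j)) = 0 := by
  rw [rep2 μ hμ (Nat.zero_le j), Nat.sub_zero]
  rw [pderiv_mul, pderiv_pow, pderiv_X_of_ne (by decide), pderiv_aeval_uu, pderiv_uu_0, derivG0]
  simp

open MvPolynomial in
lemma rename_uu : rename (Equiv.swap (0:Fin 2) 1) uu = uu := by
  simp [uu, Equiv.swap_apply_left, Equiv.swap_apply_right, mul_comm]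

open MvPolynomial in
lemma rename_aeval_uu (g : Polynomial ℝ) :
    rename (Equiv.swap (0:Fin 2) 1) (Polynomial.aeval uu g) = Polynomial.aeval uu g := by
  have h := Polynomial.aeval_algHom_apply
    ((rename (Equiv.swap (0:Fin 2) 1) : MvPolynomial (Fin 2) ℂ →ₐ[ℂ] MvPolynomial (Fin 2) ℂ).restrictScalars ℝ)
    uu g
  simp only [AlgHom.coe_restrictScalars', AlgHom.coe_restrictScalars] at h
  rw [← h]
  show Polynomial.aeval (rename (Equiv.swap (0:Fin 2) 1) uu) g = _
  rw [rename_uu]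

open MvPolynomial in
lemma swap_zernike (μ : ℝ) (hμ : μ > -1) (k j : ℕ) :
    rename (Equiv.swap (0:Fin 2) 1) (zernikeQ μ k j) = zernikeQ μ j k := by
  rcases le_total j k with h | h
  · rw [rep1 μ hμ h, rep2 μ hμ h, map_mul, map_pow, rename_X, Equiv.swap_apply_left,
        rename_aeval_uu]
  · rw [rep2 μ hμ h, rep1 μ hμ h, map_mul, map_pow, rename_X, Equiv.swap_apply_right,
        rename_aeval_uu]

open MvPolynomial in
theorem zernike_structure (μ : ℝ) (hμ : μ > -1) (k j : ℕ) :
    (1 ≤ k →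
      C ((((k : ℝ) + (j : ℝ) + μ + 1 : ℝ)) : ℂ) *
          ((1 - X 0 * X 1) * pderiv (0 : Fin 2) (zernikeQ μ k j)) =
        C ((((k : ℝ) * ((j : ℝ) + μ + 1) : ℝ)) : ℂ) *
          (zernikeQ μ (k - 1) j - zernikeQ μ k (j + 1))) ∧
    (k = 0 →
      C ((((k : ℝ) + (j : ℝ) + μ + 1 : ℝ)) : ℂ) *
          ((1 - X 0 * X 1) * pderiv (0 : Fin 2) (zernikeQ μ k j)) = 0) ∧
    (1 ≤ j →
      C ((((k : ℝ) + (j : ℝ) + μ + 1 : ℝ)) : ℂ) *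
          ((1 - X 0 * X 1) * pderiv (1 : Fin 2) (zernikeQ μ k j)) =
        C ((((j : ℝ) * ((k : ℝ) + μ + 1) : ℝ)) : ℂ) *
          (zernikeQ μ k (j - 1) - zernikeQ μ (k + 1) j)) ∧
    (j = 0 →
      C ((((k : ℝ) + (j : ℝ) + μ + 1 : ℝ)) : ℂ) *
          ((1 - X 0 * X 1) * pderiv (1 : Fin 2) (zernikeQ μ k j)) = 0) := by
  have hinj : Function.Injective (Equiv.swap (0:Fin 2) 1) := Equiv.injective _
  refine ⟨fun hk => mainZ μ hμ k j hk, fun hk0 => ?_, fun hj => ?_, fun hj0 => ?_⟩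
  · subst hk0
    simpa using mainZ0 μ hμ j
  · have h := congrArg (rename (Equiv.swap (0:Fin 2) 1)) (mainZ μ hμ j k hj)
    simp only [map_mul, map_sub, map_one, rename_C, rename_X] at h
    rw [← MvPolynomial.pderiv_rename hinj, swap_zernike μ hμ j k, swap_zernike μ hμ (j-1) k,
        swap_zernike μ hμ j (k+1)] at h
    simp only [Equiv.swap_apply_left, Equiv.swap_apply_right] at h
    simp only [Complex.ofReal_add, Complex.ofReal_mul, Complex.ofReal_natCast,
      Complex.ofReal_one, map_add, map_mul, map_one, map_natCast] at h ⊢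
    linear_combination h
  · subst hj0
    have h := congrArg (rename (Equiv.swap (0:Fin 2) 1)) (mainZ0 μ hμ k)
    simp only [map_mul, map_sub, map_one, rename_C, rename_X, map_zero] at h
    rw [← MvPolynomial.pderiv_rename hinj, swap_zernike μ hμ 0 k] at h
    simp only [Equiv.swap_apply_left, Equiv.swap_apply_right] at h
    simp only [Complex.ofReal_add, Complex.ofReal_mul, Complex.ofReal_natCast,
      Complex.ofReal_one, Complex.ofReal_zero, Nat.cast_zero, map_add, map_mul, map_one,
      map_natCast] at h ⊢
    linear_combination h
end
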